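/- arXiv:0707.0434 — 7 statements merged into one kernel-verified Lean document; each statement's English description precedes it below -/
import Mathlib

section
/- Let f₁, f₂, f₃ be pairwise relatively prime univariate polynomials over ℂ, not all constant, such that f₁ + f₂ + f₃ = 0. Then max(deg f₁, deg f₂, deg f₃) ≤ r(f₁f₂f₃) − 1, where r(g) denotes the number of distinct roots of g (equivalently, the degree of the radical of g). -/
open Polynomial

/-- `rdeg g` = number of distinct complex roots of `g` (degree of its radical). -/
noncomputable def rdeg (g : ℂ[X]) : ℕ := g.roots.toFinset.card

open UniqueFactorizationMonoid in
lemma normalizedFactors_eq_roots (g : ℂ[X]) (hg : g ≠ 0) :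
    normalizedFactors g = g.roots.map fun a => X - C a := by
  have hsplit : g = C g.leadingCoeff * (g.roots.map fun a => X - C a).prod :=
    (IsAlgClosed.splits g).eq_prod_roots
  have hu : IsUnit (C g.leadingCoeff) := isUnit_C.mpr (IsUnit.mk0 _ (leadingCoeff_ne_zero.mpr hg))
  have hassoc : Associated (g.roots.map fun a => X - C a).prod g := by
    conv_rhs => rw [hsplit]
    exact (associated_unit_mul_left _ _ hu).symm
  rw [← hassoc.normalizedFactors_eq, normalizedFactors_prod_eq _ fun a ha => by
    obtain ⟨r, _, rfl⟩ := Multiset.mem_map.mp ha; exact irreducible_X_sub_C r]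
  rw [Multiset.map_map]
  exact Multiset.map_congr rfl fun a _ => (monic_X_sub_C a).normalize_eq_self

open UniqueFactorizationMonoid in
lemma radical_natDegree_eq (g : ℂ[X]) (hg : g ≠ 0) :
    (radical g).natDegree = g.roots.toFinset.card := by
  have hinj : Function.Injective fun a : ℂ => X - C a := fun a b h => by
    have := congrArg (fun p => -(p.coeff 0)) h
    simpa using this
  have hpf : primeFactors g = g.roots.toFinset.image fun a => X - C a := by
    ext p
    simp [primeFactors, normalizedFactors_eq_roots g hg]
  rw [radical, hpf, Finset.prod_image fun a _ b _ h => hinj h]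
  rw [natDegree_prod _ _ fun a _ => X_sub_C_ne_zero a]
  simp [natDegree_X_sub_C]

theorem stmt0 (f₁ f₂ f₃ : ℂ[X])
    (h12 : IsCoprime f₁ f₂) (h13 : IsCoprime f₁ f₃) (h23 : IsCoprime f₂ f₃)
    (hconst : ¬ (f₁.natDegree = 0 ∧ f₂.natDegree = 0 ∧ f₃.natDegree = 0))
    (hsum : f₁ + f₂ + f₃ = 0) :
    max (max f₁.natDegree f₂.natDegree) f₃.natDegree + 1 ≤ rdeg (f₁ * f₂ * f₃) := by
  have h1 : f₁ ≠ 0 := by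
    rintro rfl
    exact hconst ⟨natDegree_zero, natDegree_eq_zero_of_isUnit (isCoprime_zero_left.mp h12),
      natDegree_eq_zero_of_isUnit (isCoprime_zero_left.mp h13)⟩
  have h2 : f₂ ≠ 0 := by
    rintro rfl
    exact hconst ⟨natDegree_eq_zero_of_isUnit (isCoprime_zero_right.mp h12), natDegree_zero,
      natDegree_eq_zero_of_isUnit (isCoprime_zero_left.mp h23)⟩
  have h3 : f₃ ≠ 0 := by
    rintro rfl
    exact hconst ⟨natDegree_eq_zero_of_isUnit (isCoprime_zero_right.mp h13),
      natDegree_eq_zero_of_isUnit (isCoprime_zero_right.mp h23), natDegree_zero⟩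
  have habc := Polynomial.abc h1 h2 h3 h12 hsum
  rcases habc with ⟨ha, hb, hc⟩ | ⟨da, db, dc⟩
  · have hne : f₁ * f₂ * f₃ ≠ 0 := mul_ne_zero (mul_ne_zero h1 h2) h3
    rw [rdeg, ← radical_natDegree_eq _ hne]
    omega
  · exact absurd ⟨natDegree_eq_zero_of_derivative_eq_zero da,
      natDegree_eq_zero_of_derivative_eq_zero db,
      natDegree_eq_zero_of_derivative_eq_zero dc⟩ hconst
end

section
/- Let n ≥ 3 and f₁, …, fₙ be pairwise relatively prime univariate polynomials over ℂ, not all constant, with f₁ + f₂ + ⋯ + fₙ = 0. Then max₁≤m≤n deg fₘ ≤ (n−2)·(r(f₁f₂⋯fₙ) − 1), where r(g) is the number of distinct roots of g. -/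
open Polynomial

/-- L1: higher-derivative divisibility. -/
lemma pow_dvd_iterate_derivative {R : Type*} [CommSemiring R] (p : R[X]) :
    ∀ (j e : ℕ) (f : R[X]), p ^ e ∣ f → p ^ (e - j) ∣ derivative^[j] f := by
  intro j
  induction j with
  | zero => intro e f h; simpa using h
  | succ j ih =>
    intro e f h
    rw [Function.iterate_succ_apply]
    have h' : p ^ (e - 1) ∣ derivative f := by
      obtain ⟨q, rfl⟩ := h
      rw [derivative_mul, derivative_pow]
      rcases Nat.eq_zero_or_pos e with he | he
      · simp [he]
      · apply dvd_add
        · exact Dvd.dvd.mul_right (Dvd.dvd.mul_right (dvd_mul_left _ _) _) _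
        · exact Dvd.dvd.mul_right (pow_dvd_pow p (Nat.sub_le e 1)) _
    have := ih (e - 1) (derivative f) h'
    rwa [Nat.sub_sub, Nat.add_comm 1 j] at this

/-- L2: coefficient of a product at the sum of degree bounds. -/
lemma coeff_prod_exact {R : Type*} [CommSemiring R] {ι : Type*} (s : Finset ι)
    (f : ι → R[X]) (n : ι → ℕ) (h : ∀ i ∈ s, (f i).natDegree ≤ n i) :
    (∏ i ∈ s, f i).coeff (∑ i ∈ s, n i) = ∏ i ∈ s, (f i).coeff (n i) := by
  classical
  induction s using Finset.induction_on with
  | empty => simp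
  | @insert a s ha ih =>
    rw [Finset.prod_insert ha, Finset.sum_insert ha, Finset.prod_insert ha,
      coeff_mul_add_eq_of_natDegree_le (h a (Finset.mem_insert_self a s))
        (le_trans (natDegree_prod_le _ _) (Finset.sum_le_sum fun i hi => h i (Finset.mem_insert_of_mem hi))),
      ih fun i hi => h i (Finset.mem_insert_of_mem hi)]

/-- L3: a sum of distinct naturals indexed by `Fin k` is at least `0+1+...+(k-1)`. -/
lemma sum_fin_le_sum_of_injective : ∀ (k : ℕ) (d : Fin k → ℕ), Function.Injective d →
    ∑ j : Fin k, (j : ℕ) ≤ ∑ j, d j := by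
  intro k
  induction k with
  | zero => simp
  | succ k ih =>
    intro d hd
    -- index of the maximum value
    obtain ⟨l₀, hl₀⟩ := Finset.exists_max_image Finset.univ d ⟨0, Finset.mem_univ 0⟩
    -- d l₀ ≥ k since d injective on k+1 elements
    have hmax : k ≤ d l₀ := by
      by_contra hlt
      push_neg at hlt
      have : ∀ l, d l < k := fun l => lt_of_le_of_lt (hl₀.2 l (Finset.mem_univ l)) hlt
      have hcard := Fintype.card_le_of_injective (fun l : Fin (k+1) => (⟨d l, this l⟩ : Fin k))
        (fun a b hab => hd (by simpa using congrArg Fin.val hab))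
      simp at hcard
    -- remove l₀ and recurse
    have hrest := ih (fun j : Fin k => d ((l₀.succAbove) j))
      (fun a b hab => (Fin.succAbove_right_injective (p := l₀)) (hd hab))
    calc ∑ j : Fin (k+1), (j : ℕ) = (∑ j : Fin k, (j : ℕ)) + k := by
          rw [Fin.sum_univ_castSucc]; simp
      _ ≤ (∑ j : Fin k, d (l₀.succAbove j)) + d l₀ := Nat.add_le_add hrest hmax
      _ = ∑ j, d j := by rw [Fin.sum_univ_succAbove d l₀, Nat.add_comm]

lemma wronskian_det_ne_zero : ∀ (N k : ℕ) (g : Fin k → ℂ[X]),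
    (∑ l, (g l).natDegree) ≤ N → LinearIndependent ℂ g →
    (Matrix.of fun l j : Fin k => derivative^[(j : ℕ)] (g l)).det ≠ 0 := by
  intro N
  induction N using Nat.strong_induction_on with
  | _ N IH =>
  intro k g hN hg
  have hgne : ∀ l, g l ≠ 0 := fun l => hg.ne_zero l
  by_cases hinj : Function.Injective fun l => (g l).natDegree
  · -- distinct degrees: compute a nonzero coefficient of the determinant
    set d : Fin k → ℕ := fun l => (g l).natDegree with hd
    set T : ℕ := ∑ j : Fin k, (j : ℕ) with hT
    set Dsum : ℕ := ∑ l, d l with hDsum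
    have hTD : T ≤ Dsum := sum_fin_le_sum_of_injective k d hinj
    set M : Matrix (Fin k) (Fin k) ℂ[X] :=
      Matrix.of fun l j : Fin k => derivative^[(j : ℕ)] (g l) with hM
    intro hdet0
    -- the target coefficient
    set B : Matrix (Fin k) (Fin k) ℂ :=
      Matrix.of (fun l i : Fin k => ((d l).descFactorial (i : ℕ) : ℂ) * (g l).leadingCoeff) with hB
    have key : (M.det).coeff (Dsum - T) = B.det := by
      rw [Matrix.det_apply, Matrix.det_apply, Polynomial.finset_sum_coeff]
      refine Finset.sum_congr rfl fun σ _ => ?_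
      rw [Polynomial.coeff_smul]
      congr 1
      by_cases hgood : ∀ i : Fin k, (i : ℕ) ≤ d (σ i)
      · have hb : ∀ i : Fin k, (derivative^[(i : ℕ)] (g (σ i))).natDegree ≤ d (σ i) - (i : ℕ) :=
          fun i => natDegree_iterate_derivative _ _
        have hsumn : ∑ i : Fin k, (d (σ i) - (i : ℕ)) = Dsum - T := by
          rw [Finset.sum_tsub_distrib Finset.univ (fun i _ => hgood i), Equiv.sum_comp σ d]
        have := coeff_prod_exact Finset.univ
          (fun i : Fin k => derivative^[(i : ℕ)] (g (σ i)))
          (fun i : Fin k => d (σ i) - (i : ℕ)) (fun i _ => hb i)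
        rw [hsumn] at this
        have entry : ∀ i : Fin k, (derivative^[(i : ℕ)] (g (σ i))).coeff (d (σ i) - (i : ℕ))
            = ((d (σ i)).descFactorial (i : ℕ) : ℂ) * (g (σ i)).leadingCoeff := by
          intro i
          rw [Polynomial.coeff_iterate_derivative]
          have h1 : d (σ i) - (i : ℕ) + (i : ℕ) = d (σ i) := Nat.sub_add_cancel (hgood i)
          rw [h1, nsmul_eq_mul]
          rfl
        calc (∏ i : Fin k, M (σ i) i).coeff (Dsum - T)
            = ∏ i : Fin k, (derivative^[(i : ℕ)] (g (σ i))).coeff (d (σ i) - (i : ℕ)) := this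
          _ = ∏ i : Fin k, B (σ i) i := by
              refine Finset.prod_congr rfl fun i _ => ?_
              rw [entry i]; rfl
      · push_neg at hgood
        obtain ⟨i₀, hi₀⟩ := hgood
        have hzero : M (σ i₀) i₀ = 0 := iterate_derivative_eq_zero hi₀
        have h1 : (∏ i : Fin k, M (σ i) i) = 0 :=
          Finset.prod_eq_zero (Finset.mem_univ i₀) hzero
        have h2 : (∏ i : Fin k, B (σ i) i) = 0 := by
          refine Finset.prod_eq_zero (Finset.mem_univ i₀) ?_
          have : (d (σ i₀)).descFactorial (i₀ : ℕ) = 0 :=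
            Nat.descFactorial_eq_zero_iff_lt.mpr hi₀
          show ((d (σ i₀)).descFactorial (i₀ : ℕ) : ℂ) * (g (σ i₀)).leadingCoeff = 0
          rw [this]; simp
        rw [h1, h2, Polynomial.coeff_zero]
    have hBdet : B.det ≠ 0 := by
      have hBfac : B = Matrix.diagonal (fun l => (g l).leadingCoeff) *
          Matrix.of (fun l i : Fin k => (descPochhammer ℂ (i : ℕ)).eval ((d l : ℂ))) := by
        ext l i
        rw [Matrix.diagonal_mul]
        show ((d l).descFactorial (i : ℕ) : ℂ) * (g l).leadingCoeff
          = (g l).leadingCoeff * (descPochhammer ℂ (i : ℕ)).eval ((d l : ℂ))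
        rw [descPochhammer_eval_eq_descFactorial, mul_comm]
      rw [hBfac, Matrix.det_mul, Matrix.det_diagonal]
      apply mul_ne_zero
      · exact Finset.prod_ne_zero_iff.mpr fun l _ => leadingCoeff_ne_zero.mpr (hgne l)
      · rw [← Matrix.det_eval_matrixOfPolynomials_eq_det_vandermonde
          (fun l => ((d l : ℂ))) (fun i => descPochhammer ℂ (i : ℕ))
          (fun i => descPochhammer_natDegree ℂ (i : ℕ))
          (fun i => monic_descPochhammer ℂ (i : ℕ))]
        exact Matrix.det_vandermonde_ne_zero_iff.mpr
          (fun a b hab => hinj (Nat.cast_injective hab))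
    rw [hdet0, Polynomial.coeff_zero] at key
    exact hBdet key.symm
  · -- two equal degrees: column reduce and recurse
    obtain ⟨l₂, l₁, hdeq, hne⟩ := Function.not_injective_iff.mp hinj
    have hlc1 : (g l₁).leadingCoeff ≠ 0 := leadingCoeff_ne_zero.mpr (hgne l₁)
    have hlc2 : (g l₂).leadingCoeff ≠ 0 := leadingCoeff_ne_zero.mpr (hgne l₂)
    set c : ℂ := (g l₂).leadingCoeff / (g l₁).leadingCoeff with hc
    have hcne : c ≠ 0 := div_ne_zero hlc2 hlc1
    set p : ℂ[X] := g l₂ - C c * g l₁ with hp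
    have hpair : LinearIndependent ℂ (g ∘ ![l₂, l₁]) := by
      apply hg.comp
      intro a b hab
      fin_cases a <;> fin_cases b <;> simp_all <;> exact absurd hab.symm hne
    have hpne : p ≠ 0 := by
      intro h0
      have h2 : g l₂ = c • g l₁ := by
        rw [Polynomial.smul_eq_C_mul]
        exact sub_eq_zero.mp h0
      have hfix : (g ∘ ![l₂, l₁]) = ![g l₂, g l₁] := by
        funext a; fin_cases a <;> rfl
      have hli2 : LinearIndependent ℂ ![g l₂, g l₁] := hfix ▸ hpair
      exact (linearIndependent_fin2.mp hli2).2 c (by simpa using h2.symm)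
    have hdeg : p.degree < (g l₂).degree := by
      apply degree_sub_lt
      · rw [degree_C_mul hcne, degree_eq_natDegree (hgne l₂), degree_eq_natDegree (hgne l₁), hdeq]
      · exact hgne l₂
      · rw [leadingCoeff_mul, leadingCoeff_C, hc, div_mul_cancel₀ _ hlc1]
    have hnat : p.natDegree < (g l₂).natDegree := natDegree_lt_natDegree hpne hdeg
    set g' : Fin k → ℂ[X] := Function.update g l₂ p with hg'
    have hmeas : (∑ l, (g' l).natDegree) < ∑ l, (g l).natDegree := by
      have h1 : (fun l => (g' l).natDegree) = Function.update (fun l => (g l).natDegree) l₂ p.natDegree := by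
        funext l
        by_cases hl : l = l₂
        · subst hl; simp [hg', Function.update_self]
        · simp [hg', Function.update_of_ne hl]
      rw [h1, Finset.sum_update_of_mem (Finset.mem_univ l₂),
        ← Finset.add_sum_erase _ _ (Finset.mem_univ l₂), Finset.erase_eq]
      exact Nat.add_lt_add_right hnat _
    have hgi' : LinearIndependent ℂ g' := by
      rw [Fintype.linearIndependent_iff]
      intro a ha
      set b : Fin k → ℂ := Function.update a l₁ (a l₁ - a l₂ * c) with hbdef
      have e1 : ∑ l, a l • g' l = (∑ l, a l • g l) - (a l₂ * c) • g l₁ := by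
        have hterm : ∀ l : Fin k, a l • g' l
            = a l • g l - (if l = l₂ then (a l₂ * c) • g l₁ else 0) := by
          intro l
          by_cases hl : l = l₂
          · subst hl
            rw [if_pos rfl]
            simp only [hg', Function.update_self, hp]
            rw [← Polynomial.smul_eq_C_mul, smul_sub, smul_smul]
          · rw [if_neg hl]
            simp [hg', Function.update_of_ne hl]
        calc ∑ l, a l • g' l
            = ∑ l, (a l • g l - (if l = l₂ then (a l₂ * c) • g l₁ else 0)) :=
              Finset.sum_congr rfl fun l _ => hterm l
          _ = (∑ l, a l • g l) - ∑ l, (if l = l₂ then (a l₂ * c) • g l₁ else 0) :=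
              Finset.sum_sub_distrib _ _
          _ = (∑ l, a l • g l) - (a l₂ * c) • g l₁ := by
              rw [Finset.sum_ite_eq' Finset.univ l₂ (fun _ => (a l₂ * c) • g l₁)]
              simp
      have e2 : ∑ l, b l • g l = (∑ l, a l • g l) - (a l₂ * c) • g l₁ := by
        have hterm : ∀ l : Fin k, b l • g l
            = a l • g l - (if l = l₁ then (a l₂ * c) • g l₁ else 0) := by
          intro l
          by_cases hl : l = l₁
          · subst hl
            rw [if_pos rfl, hbdef, Function.update_self, sub_smul]
          · rw [if_neg hl]
            simp [hbdef, Function.update_of_ne hl]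
        calc ∑ l, b l • g l
            = ∑ l, (a l • g l - (if l = l₁ then (a l₂ * c) • g l₁ else 0)) :=
              Finset.sum_congr rfl fun l _ => hterm l
          _ = (∑ l, a l • g l) - (a l₂ * c) • g l₁ := by
              rw [Finset.sum_sub_distrib,
                Finset.sum_ite_eq' Finset.univ l₁ (fun _ => (a l₂ * c) • g l₁)]
              simp
      have hb0 : ∀ l, b l = 0 := by
        have : ∑ l, b l • g l = 0 := by rw [e2, ← e1, ha]
        exact Fintype.linearIndependent_iff.mp hg b this
      have ha2 : a l₂ = 0 := by
        have h := hb0 l₂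
        rwa [hbdef, Function.update_of_ne hne] at h
      intro l
      by_cases hl : l = l₁
      · have h := hb0 l
        rw [hbdef, hl, Function.update_self, ha2, zero_mul, sub_zero] at h
        rw [hl]; exact h
      · have h := hb0 l
        rwa [hbdef, Function.update_of_ne hl] at h
    -- determinant is unchanged by the row operation
    set M : Matrix (Fin k) (Fin k) ℂ[X] :=
      Matrix.of fun l j : Fin k => derivative^[(j : ℕ)] (g l) with hM
    have hM' : (Matrix.of fun l j : Fin k => derivative^[(j : ℕ)] (g' l))
        = M.updateRow l₂ (M l₂ + (-C c) • M l₁) := by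
      refine Matrix.ext fun l j => ?_
      by_cases hl : l = l₂
      · rw [hl, Matrix.updateRow_self]
        show derivative^[(j : ℕ)] (g' l₂) = _
        rw [hg', Function.update_self, hp, iterate_derivative_sub, iterate_derivative_C_mul]

        simp only [Pi.add_apply, Pi.smul_apply, smul_eq_mul, hM, Matrix.of_apply]
        ring
      · rw [Matrix.updateRow_ne hl]
        show derivative^[(j : ℕ)] (g' l) = M l j
        rw [hg', Function.update_of_ne hl]
        rfl
    have hdet : (Matrix.of fun l j : Fin k => derivative^[(j : ℕ)] (g' l)).det = M.det := by
      rw [hM', Matrix.det_updateRow_add, Matrix.det_updateRow_smul, Matrix.updateRow_eq_self,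
        Matrix.det_updateRow_eq_zero (Ne.symm hne)]
      ring
    have := IH (∑ l, (g' l).natDegree) (lt_of_lt_of_le hmeas hN) k g' le_rfl hgi'
    rw [hdet] at this
    exact this
/-- L6: the "high multiplicity part" of `f`: divides all derivatives up to order `K`,
and has degree at least `deg f - K * rdeg f`. -/
lemma exists_hpart (K : ℕ) (f : ℂ[X]) (hf : f ≠ 0) :
    ∃ h : ℂ[X], h ≠ 0 ∧ h ∣ f ∧ (∀ j ≤ K, h ∣ derivative^[j] f) ∧
      (f.natDegree : ℤ) - K * (rdeg f) ≤ (h.natDegree : ℤ) := by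
  classical
  set S := f.roots.toFinset with hS
  have hpairs : Set.Pairwise ↑S (Function.onFun IsCoprime fun a : ℂ => (X - C a) ^ (f.roots.count a - K)) := by
    intro a _ b _ hab
    exact ((pairwise_coprime_X_sub_C (Function.injective_id)) hab).pow
  have hdvdj : ∀ j ≤ K, (∏ a ∈ S, (X - C a) ^ (f.roots.count a - K)) ∣ derivative^[j] f := by
    intro j hj
    apply Finset.prod_dvd_of_coprime hpairs
    intro a _
    have h1 : (X - C a) ^ (f.roots.count a) ∣ f := by
      rw [count_roots]; exact pow_rootMultiplicity_dvd f a
    have h2 := pow_dvd_iterate_derivative (X - C a) j (f.roots.count a) f h1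
    exact dvd_trans (pow_dvd_pow _ (Nat.sub_le_sub_left hj _)) h2
  refine ⟨∏ a ∈ S, (X - C a) ^ (f.roots.count a - K), ?_, ?_, hdvdj, ?_⟩
  · exact Finset.prod_ne_zero_iff.mpr fun a _ => pow_ne_zero _ (X_sub_C_ne_zero a)
  · simpa using hdvdj 0 (Nat.zero_le K)
  · have hdeg : (∏ a ∈ S, (X - C a) ^ (f.roots.count a - K)).natDegree
        = ∑ a ∈ S, (f.roots.count a - K) := by
      rw [natDegree_prod _ _ (fun a _ => pow_ne_zero _ (X_sub_C_ne_zero a))]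
      refine Finset.sum_congr rfl fun a _ => ?_
      rw [natDegree_pow, natDegree_X_sub_C, mul_one]
    rw [hdeg]
    have hsplit : f.roots.card = f.natDegree :=
      (splits_iff_card_roots).mp (IsAlgClosed.splits f)
    have hsum : ∑ a ∈ S, f.roots.count a = f.natDegree := by
      rw [hS, Multiset.toFinset_sum_count_eq, hsplit]
    have : (f.natDegree : ℤ) - K * (rdeg f) = ∑ a ∈ S, ((f.roots.count a : ℤ) - K) := by
      rw [Finset.sum_sub_distrib, Finset.sum_const, ← Nat.cast_sum, hsum]
      simp [rdeg, hS, mul_comm]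
    rw [this, Nat.cast_sum]
    apply Finset.sum_le_sum
    intro a _
    omega

lemma rdeg_sum_le (n : ℕ) (f : Fin n → ℂ[X]) (hne : ∀ i, f i ≠ 0)
    (hcop : ∀ i j, i ≠ j → IsCoprime (f i) (f j)) :
    ∑ i, rdeg (f i) ≤ rdeg (∏ i, f i) := by
  classical
  have hProd : (∏ i, f i) ≠ 0 := Finset.prod_ne_zero_iff.mpr fun i _ => hne i
  have hsub : ∀ i, (f i).roots.toFinset ⊆ (∏ i, f i).roots.toFinset := by
    intro i
    rw [Multiset.toFinset_subset]
    exact Multiset.subset_of_le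
      (roots.le_of_dvd hProd (Finset.dvd_prod_of_mem f (Finset.mem_univ i)))
  have hdisj : ∀ i ∈ Finset.univ (α := Fin n), ∀ j ∈ Finset.univ (α := Fin n), i ≠ j →
      Disjoint ((f i).roots.toFinset) ((f j).roots.toFinset) := by
    intro i _ j _ hij
    rw [Finset.disjoint_left]
    intro a hai haj
    have h1 : (X - C a) ∣ f i := dvd_iff_isRoot.mpr (isRoot_of_mem_roots (Multiset.mem_toFinset.mp hai))
    have h2 : (X - C a) ∣ f j := dvd_iff_isRoot.mpr (isRoot_of_mem_roots (Multiset.mem_toFinset.mp haj))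
    exact Polynomial.not_isUnit_X_sub_C a ((hcop i j hij).isUnit_of_dvd' h1 h2)
  calc ∑ i, rdeg (f i) = (Finset.univ.biUnion fun i => (f i).roots.toFinset).card :=
        (Finset.card_biUnion hdisj).symm
    _ ≤ rdeg (∏ i, f i) :=
        Finset.card_le_card (Finset.biUnion_subset.mpr fun i _ => hsub i)

theorem stmt2 (n : ℕ) (hn : 3 ≤ n) (f : Fin n → ℂ[X])
    (hcop : ∀ i j, i ≠ j → IsCoprime (f i) (f j))
    (hconst : ¬ ∀ i, (f i).natDegree = 0)
    (hsum : ∑ i, f i = 0) :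
    ∀ m, ((f m).natDegree : ℤ) ≤ ((n : ℤ) - 2) * ((rdeg (∏ i, f i) : ℤ) - 1) := by
  classical
  intro m
  have hn0 : 0 < n := by omega
  -- all the fᵢ are nonzero
  have hne : ∀ i, f i ≠ 0 := by
    intro i hi
    apply hconst
    intro j
    rcases eq_or_ne j i with rfl | hj
    · rw [hi]; simp
    · exact natDegree_eq_zero_of_isUnit (isCoprime_zero_left.mp (hi ▸ hcop i j (Ne.symm hj)))
  have hProd : (∏ i, f i) ≠ 0 := Finset.prod_ne_zero_iff.mpr fun i _ => hne i
  set r : ℕ := rdeg (∏ i, f i) with hrdef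
  -- r ≥ 1
  have hr1 : 1 ≤ r := by
    push_neg at hconst
    obtain ⟨i₀, hi₀⟩ := hconst
    obtain ⟨a, ha⟩ := Complex.exists_root (natDegree_pos_iff_degree_pos.mp (Nat.pos_of_ne_zero hi₀))
    have haP : a ∈ (∏ i, f i).roots.toFinset := by
      rw [Multiset.mem_toFinset, mem_roots hProd]
      exact ha.dvd (Finset.dvd_prod_of_mem f (Finset.mem_univ i₀))
    exact Finset.card_pos.mpr ⟨a, haP⟩
  -- a linearly independent subfamily of (f i)_{i ≠ m} spanning all the f i
  set t : Set ℂ[X] := f '' {i | i ≠ m} with ht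
  obtain ⟨b, hbt, hspan, hbi⟩ := exists_linearIndependent ℂ t
  have hbfin : b.Finite := ((Set.toFinite _).image f).subset hbt
  set bf : Finset ℂ[X] := hbfin.toFinset with hbf
  set k : ℕ := bf.card with hk
  set e := bf.equivFin with he
  set g : Fin k → ℂ[X] := fun l => ((e.symm l : ℂ[X])) with hg
  have hgmemb : ∀ l, g l ∈ b := by
    intro l
    have := (e.symm l).2
    rwa [Set.Finite.mem_toFinset] at this
  have hginj : Function.Injective g := by
    intro a b hab
    have := Subtype.ext (p := fun x => x ∈ bf) hab
    exact e.symm.injective this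
  have hgli : LinearIndependent ℂ g := by
    have hcomp : g = (fun x : b => (x : ℂ[X])) ∘ (fun l =>
        (⟨(e.symm l : ℂ[X]), hgmemb l⟩ : b)) := rfl
    rw [hcomp]
    apply hbi.comp
    intro a b hab
    simp only [Subtype.mk.injEq] at hab
    exact e.symm.injective (Subtype.ext hab)
  have hrange : Set.range g = b := by
    ext x
    constructor
    · rintro ⟨l, rfl⟩; exact hgmemb l
    · intro hx
      have hx' : x ∈ bf := by rwa [hbf, Set.Finite.mem_toFinset]
      exact ⟨e ⟨x, hx'⟩, by simp [hg]⟩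
  -- each f i lies in the span of g
  have hmem : ∀ i, f i ∈ Submodule.span ℂ (Set.range g) := by
    have hb : ∀ i, i ≠ m → f i ∈ Submodule.span ℂ b := by
      intro i hi
      have h1 : f i ∈ Submodule.span ℂ t := Submodule.subset_span ⟨i, hi, rfl⟩
      rwa [← hspan] at h1
    intro i
    rw [hrange]
    rcases eq_or_ne i m with rfl | hi
    · have hm : f i = -∑ j ∈ Finset.univ.erase i, f j := by
        have := Finset.sum_erase_add Finset.univ f (Finset.mem_univ i)
        rw [hsum] at this
        linear_combination this
      rw [hm]
      apply Submodule.neg_mem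
      apply Submodule.sum_mem
      intro j hj
      exact hb j (Finset.mem_erase.mp hj).1
    · exact hb i hi
  -- index selection: each g l is f (χ l) with χ l ≠ m, χ injective
  have hchoose : ∀ l, ∃ i, i ≠ m ∧ f i = g l := by
    intro l
    obtain ⟨i, hi, hfi⟩ := hbt (hgmemb l)
    exact ⟨i, hi, hfi⟩
  choose χ hχm hχf using hchoose
  have hχinj : Function.Injective χ := by
    intro a b hab
    apply hginj
    rw [← hχf a, ← hχf b, hab]
  -- k ≤ n - 1
  have hkle : k ≤ n - 1 := by
    have hmaps : ∀ l ∈ Finset.univ (α := Fin k), χ l ∈ Finset.univ.erase m := by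
      intro l _
      exact Finset.mem_erase.mpr ⟨hχm l, Finset.mem_univ _⟩
    have := Finset.card_le_card_of_injOn χ hmaps (Function.Injective.injOn hχinj)
    simpa [Finset.card_erase_of_mem] using this
  -- k ≥ 2
  have hk2 : 2 ≤ k := by
    by_contra hklt
    push_neg at hklt
    have hcases : k = 0 ∨ k = 1 := by omega
    rcases hcases with h0 | h1
    · -- k = 0 : f m = 0
      have huniv : (Finset.univ : Finset (Fin k)) = ∅ := by
        apply Finset.card_eq_zero.mp
        rw [Finset.card_univ, Fintype.card_fin, h0]
      obtain ⟨c, hc⟩ := Submodule.mem_span_range_iff_exists_fun ℂ |>.mp (hmem m)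
      rw [huniv, Finset.sum_empty] at hc
      exact hne m hc.symm
    · -- k = 1 : all f i are unit multiples of g l₀
      have hcard1 : (Finset.univ : Finset (Fin k)).card = 1 := by
        rw [Finset.card_univ, Fintype.card_fin, h1]
      obtain ⟨l₀, huniv⟩ := Finset.card_eq_one.mp hcard1
      have hrep : ∀ i, ∃ c : ℂ, c ≠ 0 ∧ f i = c • g l₀ := by
        intro i
        obtain ⟨c, hc⟩ := Submodule.mem_span_range_iff_exists_fun ℂ |>.mp (hmem i)
        rw [huniv, Finset.sum_singleton] at hc
        refine ⟨c l₀, ?_, hc.symm⟩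
        intro h0
        apply hne i
        rw [← hc, h0, zero_smul]
      apply hconst
      intro i
      obtain ⟨j, hj⟩ := Fintype.exists_ne_of_one_lt_card (by simp; omega) i
      obtain ⟨ci, hci, hfi⟩ := hrep i
      obtain ⟨cj, hcj, hfj⟩ := hrep j
      have hdvd : f i ∣ f j := by
        refine ⟨C (cj / ci), ?_⟩
        have hcc : ci * (cj / ci) = cj := by field_simp
        rw [hfi, hfj, smul_eq_C_mul, smul_eq_C_mul, mul_right_comm, ← C_mul, hcc]
      exact natDegree_eq_zero_of_isUnit ((hcop i j (Ne.symm hj)).isUnit_of_dvd' dvd_rfl hdvd)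
  set K : ℕ := k - 1 with hK
  set T : ℕ := ∑ j : Fin k, (j : ℕ) with hT
  -- the h-parts
  have hhex := fun i => exists_hpart K (f i) (hne i)
  choose h hh0 hhdvdf hhdvdder hhdeg using hhex
  -- the Wronskian
  set M : Matrix (Fin k) (Fin k) ℂ[X] :=
    Matrix.of fun l j : Fin k => derivative^[(j : ℕ)] (g l) with hM
  set W : ℂ[X] := M.det with hW
  have hWne : W ≠ 0 := wronskian_det_ne_zero _ k g le_rfl hgli
  -- each h i divides W
  have hdvdW : ∀ i, h i ∣ W := by
    intro i
    obtain ⟨c, hc⟩ := Submodule.mem_span_range_iff_exists_fun ℂ |>.mp (hmem i)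
    have hcne : ∃ l, c l ≠ 0 := by
      by_contra hall
      push_neg at hall
      apply hne i
      rw [← hc]
      simp [hall]
    obtain ⟨l₀, hl₀⟩ := hcne
    have hrow : (fun j : Fin k => derivative^[(j : ℕ)] (f i)) = ∑ l, (C (c l)) • M l := by
      funext j
      rw [← hc, iterate_derivative_sum, Finset.sum_apply]
      refine Finset.sum_congr rfl fun l _ => ?_
      rw [iterate_derivative_smul]
      show c l • derivative^[(j : ℕ)] (g l) = (C (c l) • M l) j
      rw [Pi.smul_apply, smul_eq_mul, ← smul_eq_C_mul]
      rfl
    have hdetN : (M.updateRow l₀ (fun j : Fin k => derivative^[(j : ℕ)] (f i))).det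
        = C (c l₀) • W := by
      rw [hrow, Matrix.det_updateRow_sum]
    have hdvd1 : h i ∣ (M.updateRow l₀ (fun j : Fin k => derivative^[(j : ℕ)] (f i))).det := by
      set N := M.updateRow l₀ (fun j : Fin k => derivative^[(j : ℕ)] (f i)) with hN
      rw [Matrix.det_apply]
      apply Finset.dvd_sum
      intro σ _
      have hfac : h i ∣ N (σ (σ⁻¹ l₀)) (σ⁻¹ l₀) := by
        rw [show σ (σ⁻¹ l₀) = l₀ from (Equiv.eq_symm_apply σ).mp rfl, hN, Matrix.updateRow_self]
        apply hhdvdder i ((σ⁻¹ l₀ : Fin k) : ℕ)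
        have : ((σ⁻¹ l₀ : Fin k) : ℕ) < k := (σ⁻¹ l₀).2
        omega
      have hprod : h i ∣ ∏ jc, N (σ jc) jc :=
        dvd_trans hfac (Finset.dvd_prod_of_mem _ (Finset.mem_univ (σ⁻¹ l₀)))
      rw [Units.smul_def, zsmul_eq_mul]
      exact Dvd.dvd.mul_left hprod _
    rw [hdetN] at hdvd1
    have hconv : W = C (c l₀)⁻¹ * (C (c l₀) • W) := by
      rw [smul_eq_mul, ← mul_assoc, ← C_mul, inv_mul_cancel₀ hl₀, C_1, one_mul]
    rw [hconv]
    exact Dvd.dvd.mul_left hdvd1 _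
  -- the product of the h i divides W
  have hprodW : (∏ i, h i) ∣ W := by
    apply Finset.prod_dvd_of_coprime
    · intro i _ j _ hij
      exact ((hcop i j hij).of_isCoprime_of_dvd_left (hhdvdf i)).of_isCoprime_of_dvd_right
        (hhdvdf j)
    · exact fun i _ => hdvdW i
  -- degree bounds
  have hlow : (∑ i, (((f i).natDegree : ℤ) - K * (rdeg (f i) : ℤ)))
      ≤ (W.natDegree : ℤ) := by
    calc ∑ i, (((f i).natDegree : ℤ) - K * (rdeg (f i) : ℤ))
        ≤ ∑ i, ((h i).natDegree : ℤ) := Finset.sum_le_sum fun i _ => hhdeg i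
      _ = ((∏ i, h i).natDegree : ℤ) := by
          rw [natDegree_prod _ _ (fun i _ => hh0 i), Nat.cast_sum]
      _ ≤ (W.natDegree : ℤ) := by
          exact_mod_cast natDegree_le_of_dvd hprodW hWne
  have hTle : T ≤ ∑ l, (g l).natDegree := by
    rw [hW, Matrix.det_apply] at hWne
    obtain ⟨σ₀, _, hσ₀⟩ := Finset.exists_ne_zero_of_sum_ne_zero hWne
    have hterm : (∏ jc, M (σ₀ jc) jc) ≠ 0 := by
      intro h0
      apply hσ₀
      rw [h0, smul_zero]
    have hjle : ∀ jc : Fin k, (jc : ℕ) ≤ (g (σ₀ jc)).natDegree := by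
      intro jc
      by_contra hlt
      push_neg at hlt
      have : M (σ₀ jc) jc = 0 := iterate_derivative_eq_zero hlt
      exact hterm (Finset.prod_eq_zero (Finset.mem_univ jc) this)
    calc T = ∑ jc : Fin k, (jc : ℕ) := hT
      _ ≤ ∑ jc : Fin k, (g (σ₀ jc)).natDegree := Finset.sum_le_sum fun jc _ => hjle jc
      _ = ∑ l, (g l).natDegree := Equiv.sum_comp σ₀ (fun l => (g l).natDegree)
  have hWup : (W.natDegree : ℤ) ≤ (∑ l, ((g l).natDegree : ℤ)) - T := by
    have hWub : W.natDegree ≤ (∑ l, (g l).natDegree) - T := by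
      rw [hW, Matrix.det_apply]
      apply Polynomial.natDegree_sum_le_of_forall_le
      intro σ _
      have hsmul : (Equiv.Perm.sign σ • ∏ jc, M (σ jc) jc).natDegree
          = (∏ jc, M (σ jc) jc).natDegree := by
        rcases Int.units_eq_one_or (Equiv.Perm.sign σ) with hs | hs <;>
          rw [hs] <;> simp
      rw [hsmul]
      by_cases hgood : ∀ jc : Fin k, (jc : ℕ) ≤ (g (σ jc)).natDegree
      · calc (∏ jc, M (σ jc) jc).natDegree
            ≤ ∑ jc : Fin k, (M (σ jc) jc).natDegree := natDegree_prod_le _ _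
          _ ≤ ∑ jc : Fin k, ((g (σ jc)).natDegree - (jc : ℕ)) :=
              Finset.sum_le_sum fun jc _ => natDegree_iterate_derivative _ _
          _ = (∑ jc : Fin k, (g (σ jc)).natDegree) - T := by
              rw [Finset.sum_tsub_distrib Finset.univ (fun jc _ => hgood jc), hT]
          _ = (∑ l, (g l).natDegree) - T := by rw [Equiv.sum_comp σ (fun l => (g l).natDegree)]
      · push_neg at hgood
        obtain ⟨jc, hjc⟩ := hgood
        have hz : (∏ jc', M (σ jc') jc') = 0 :=
          Finset.prod_eq_zero (Finset.mem_univ jc) (iterate_derivative_eq_zero hjc)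
        rw [hz, natDegree_zero]
        exact Nat.zero_le _
    calc (W.natDegree : ℤ) ≤ (((∑ l, (g l).natDegree) - T : ℕ) : ℤ) := by exact_mod_cast hWub
      _ = (∑ l, ((g l).natDegree : ℤ)) - T := by
          rw [Nat.cast_sub hTle, Nat.cast_sum]
  have hgdeg : (∑ l, ((g l).natDegree : ℤ)) ≤ ∑ i ∈ Finset.univ.erase m, ((f i).natDegree : ℤ) := by
    have h1 : ∑ l, ((g l).natDegree : ℤ) = ∑ i ∈ Finset.univ.image χ, ((f i).natDegree : ℤ) := by
      rw [Finset.sum_image (fun a _ b _ hab => hχinj hab)]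
      refine Finset.sum_congr rfl fun l _ => ?_
      rw [hχf l]
    rw [h1]
    apply Finset.sum_le_sum_of_subset_of_nonneg
    · intro i hi
      obtain ⟨l, _, rfl⟩ := Finset.mem_image.mp hi
      exact Finset.mem_erase.mpr ⟨hχm l, Finset.mem_univ _⟩
    · intro i _ _
      exact Nat.cast_nonneg _
  -- combine
  have hrle : (∑ i, (rdeg (f i) : ℤ)) ≤ (r : ℤ) := by
    exact_mod_cast rdeg_sum_le n f hne hcop
  have hsplit : (∑ i, ((f i).natDegree : ℤ))
      = ((f m).natDegree : ℤ) + ∑ i ∈ Finset.univ.erase m, ((f i).natDegree : ℤ) := by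
    rw [← Finset.sum_erase_add Finset.univ _ (Finset.mem_univ m)]
    ring
  have hKT : (K : ℤ) ≤ (T : ℤ) := by
    have : (K : ℕ) ≤ T := by
      have hmem : (⟨k - 1, by omega⟩ : Fin k) ∈ Finset.univ := Finset.mem_univ _
      have := Finset.single_le_sum (f := fun j : Fin k => (j : ℕ))
        (fun j _ => Nat.zero_le _) hmem
      simpa [hK] using this
    exact_mod_cast this
  have hKn : (K : ℤ) ≤ (n : ℤ) - 2 := by
    have : K ≤ n - 2 := by omega
    omega
  have hK1 : (1 : ℤ) ≤ (K : ℤ) := by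
    have : 1 ≤ K := by omega
    exact_mod_cast this
  have hr1' : (1 : ℤ) ≤ (r : ℤ) := by exact_mod_cast hr1
  -- main chain
  have hmain : ((f m).natDegree : ℤ) ≤ (K : ℤ) * (∑ i, (rdeg (f i) : ℤ)) - T := by
    have h1 : (∑ i, (((f i).natDegree : ℤ) - K * (rdeg (f i) : ℤ)))
        = (∑ i, ((f i).natDegree : ℤ)) - K * (∑ i, (rdeg (f i) : ℤ)) := by
      rw [Finset.sum_sub_distrib, Finset.mul_sum]
    have hbig := hlow.trans hWup
    rw [h1, hsplit] at hbig
    linarith [hgdeg]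
  have hfin : (K : ℤ) * (∑ i, (rdeg (f i) : ℤ)) - T ≤ ((n : ℤ) - 2) * ((r : ℤ) - 1) := by
    have h2 : (K : ℤ) * (∑ i, (rdeg (f i) : ℤ)) ≤ K * r :=
      mul_le_mul_of_nonneg_left hrle (by linarith)
    nlinarith [mul_le_mul_of_nonneg_right hKn (by linarith : (0:ℤ) ≤ (r:ℤ) - 1)]
  exact hmain.trans hfin
end

section
/- Let n ≥ 3 and f₁, …, fₙ be pairwise relatively prime univariate polynomials over ℂ, at most one of which is constant and not all constant, with f₁ + ⋯ + fₙ = 0. Then max₁≤m≤n deg fₘ ≤ (n−2)·(r(f₁f₂⋯fₙ) − (n−1)/2). -/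
open Polynomial

lemma coeff_mul_top {p q : ℂ[X]} {a b : ℕ} (hp : p.natDegree ≤ a) (hq : q.natDegree ≤ b) :
    (p * q).coeff (a + b) = p.coeff a * q.coeff b := by
  rcases lt_or_eq_of_le hp with h | h
  · rw [coeff_eq_zero_of_natDegree_lt h, zero_mul, coeff_eq_zero_of_natDegree_lt]
    exact natDegree_mul_le.trans_lt (by omega)
  · rcases lt_or_eq_of_le hq with h2 | h2
    · rw [coeff_eq_zero_of_natDegree_lt h2, mul_zero, coeff_eq_zero_of_natDegree_lt]
      exact natDegree_mul_le.trans_lt (by omega)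
    · subst h h2; exact coeff_mul_degree_add_degree p q

lemma coeff_prod_top {ι : Type*} (s : Finset ι) (f : ι → ℂ[X]) (d : ι → ℕ)
    (h : ∀ i ∈ s, (f i).natDegree ≤ d i) :
    (∏ i ∈ s, f i).coeff (∑ i ∈ s, d i) = ∏ i ∈ s, (f i).coeff (d i) := by
  induction s using Finset.cons_induction with
  | empty => simp
  | cons a s ha ih =>
    rw [Finset.prod_cons, Finset.sum_cons, Finset.prod_cons,
      coeff_mul_top (h a (Finset.mem_cons_self a s))
        ((natDegree_prod_le s f).trans (Finset.sum_le_sum fun i hi => h i (Finset.mem_cons_of_mem hi))),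
      ih fun i hi => h i (Finset.mem_cons_of_mem hi)]

lemma coeff_det {k : ℕ} (M : Matrix (Fin k) (Fin k) ℂ[X]) (d : Fin k → ℕ)
    (h : ∀ i j, (M i j).natDegree ≤ d i) :
    (M.det).coeff (∑ i, d i) = Matrix.det (Matrix.of fun i j => (M i j).coeff (d i)) := by
  rw [Matrix.det_apply', Matrix.det_apply', Polynomial.finset_sum_coeff]
  refine Finset.sum_congr rfl fun σ _ => ?_
  rw [coeff_intCast_mul]
  have hs : (∑ i, d i) = ∑ i, d (σ i) := (Equiv.sum_comp σ d).symm
  rw [hs, coeff_prod_top Finset.univ (fun i => M (σ i) i) (fun i => d (σ i))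
    (fun i _ => h (σ i) i)]
  rfl

lemma natDegree_det_le {k : ℕ} (M : Matrix (Fin k) (Fin k) ℂ[X]) (d : Fin k → ℕ)
    (h : ∀ i j, (M i j).natDegree ≤ d i) : M.det.natDegree ≤ ∑ i, d i := by
  rw [Matrix.det_apply']
  refine natDegree_sum_le_of_forall_le _ _ fun σ _ => ?_
  refine (natDegree_mul_le).trans ?_
  rw [natDegree_intCast, zero_add]
  refine (natDegree_prod_le Finset.univ _).trans ?_
  calc ∑ i, (M (σ i) i).natDegree ≤ ∑ i, d (σ i) := Finset.sum_le_sum fun i _ => h (σ i) i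
  _ = ∑ i, d i := Equiv.sum_comp σ d


noncomputable def wrM {k : ℕ} (f : Fin k → ℂ[X]) : Matrix (Fin k) (Fin k) ℂ[X] :=
  Matrix.of fun i j : Fin k => derivative^[(j : ℕ)] (f i)

noncomputable def wr {k : ℕ} (f : Fin k → ℂ[X]) : ℂ[X] := (wrM f).det

-- base case: distinct degrees
lemma wr_ne_zero_of_injective {k : ℕ} (f : Fin k → ℂ[X]) (h0 : ∀ i, f i ≠ 0)
    (hinj : Function.Injective fun i => (f i).natDegree) : wr f ≠ 0 := by
  set d : Fin k → ℕ := fun i => (f i).natDegree with hd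
  have hdd : ∀ i, d i = (f i).natDegree := fun _ => rfl
  set M' : Matrix (Fin k) (Fin k) ℂ[X] :=
    wrM f * Matrix.diagonal (fun j : Fin k => (X : ℂ[X]) ^ (j : ℕ)) with hM'
  have hM'app : ∀ i j, M' i j = derivative^[(j : ℕ)] (f i) * X ^ (j : ℕ) := by
    intro i j; rw [hM', Matrix.mul_diagonal]; rfl
  have hbd : ∀ i j, (M' i j).natDegree ≤ d i := by
    intro i j
    rw [hM'app]
    by_cases hj : (j : ℕ) ≤ d i
    · refine natDegree_mul_le.trans ?_
      have h2 := natDegree_iterate_derivative (f i) (j : ℕ)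
      rw [natDegree_X_pow, hdd] at *
      omega
    · rw [iterate_derivative_eq_zero (by rw [hdd] at hj; omega), zero_mul, natDegree_zero]
      exact Nat.zero_le _
  have hcoeff : ∀ i j, (M' i j).coeff (d i) =
      ((d i).descFactorial (j : ℕ) : ℂ) * (f i).leadingCoeff := by
    intro i j
    rw [hM'app, coeff_mul_X_pow']
    by_cases hj : (j : ℕ) ≤ d i
    · rw [if_pos hj, coeff_iterate_derivative]
      have : d i - (j : ℕ) + (j : ℕ) = d i := by omega
      rw [this, nsmul_eq_mul]
      rfl
    · rw [if_neg hj, Nat.descFactorial_eq_zero_iff_lt.mpr (by omega)]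
      simp
  have hdet : (M'.det).coeff (∑ i, d i) =
      Matrix.det (Matrix.of fun i j : Fin k => ((d i).descFactorial (j : ℕ) : ℂ) *
        (f i).leadingCoeff) := by
    rw [coeff_det M' d hbd]
    congr 1
    ext i j
    exact hcoeff i j
  -- compute the coefficient determinant
  have hsplit : (Matrix.of fun i j : Fin k => ((d i).descFactorial (j : ℕ) : ℂ) *
      (f i).leadingCoeff) = (Matrix.diagonal fun i => (f i).leadingCoeff) *
      (Matrix.of fun i j : Fin k => (descPochhammer ℂ (j : ℕ)).eval ((d i : ℂ))) := by
    ext i j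
    rw [Matrix.diagonal_mul, Matrix.of_apply, Matrix.of_apply,
      descPochhammer_eval_eq_descFactorial]
    ring
  have hvdm : (Matrix.of fun i j : Fin k => (descPochhammer ℂ (j : ℕ)).eval ((d i : ℂ))).det ≠ 0 := by
    rw [← Matrix.det_eval_matrixOfPolynomials_eq_det_vandermonde (fun i => ((d i : ℂ)))
      (fun j => descPochhammer ℂ (j : ℕ)) (fun j => descPochhammer_natDegree ℂ (j : ℕ))
      (fun j => monic_descPochhammer ℂ (j : ℕ))]
    rw [Matrix.det_vandermonde_ne_zero_iff]
    intro a b hab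
    exact hinj (Nat.cast_injective hab)
  have hne : (M'.det).coeff (∑ i, d i) ≠ 0 := by
    rw [hdet, hsplit, Matrix.det_mul, Matrix.det_diagonal]
    exact mul_ne_zero (Finset.prod_ne_zero_iff.mpr fun i _ => leadingCoeff_ne_zero.mpr (h0 i)) hvdm
  intro hw
  apply hne
  have hdet2 : M'.det = wr f * (Matrix.diagonal (fun j : Fin k => (X : ℂ[X]) ^ (j : ℕ))).det := by
    rw [hM', Matrix.det_mul]; rfl
  rw [hdet2, hw, zero_mul, coeff_zero]

lemma wrM_update (k : ℕ) (f : Fin k → ℂ[X]) (b : Fin k) (x : ℂ[X]) :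
    wrM (Function.update f b x) = (wrM f).updateRow b (fun j => derivative^[(j:ℕ)] x) := by
  ext i j
  by_cases hib : i = b
  · subst hib; simp [wrM, Matrix.updateRow_self]
  · simp [wrM, Matrix.updateRow_ne hib, Function.update_of_ne hib]

lemma wr_ne_zero_aux (s : ℕ) : ∀ {k : ℕ} (f : Fin k → ℂ[X]),
    (∑ i, (f i).natDegree) = s → LinearIndependent ℂ f → wr f ≠ 0 := by
  induction s using Nat.strong_induction_on with
  | _ s IH =>
    intro k f hs hf
    have h0 : ∀ i, f i ≠ 0 := fun i => hf.ne_zero i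
    by_cases hinj : Function.Injective fun i => (f i).natDegree
    · exact wr_ne_zero_of_injective f h0 hinj
    · simp only [Function.not_injective_iff] at hinj
      obtain ⟨a, b, hdab, hab⟩ := hinj
      have hlin := (Fintype.linearIndependent_iff).mp hf
      set c : ℂ := (f b).leadingCoeff / (f a).leadingCoeff with hc
      have hca : c ≠ 0 :=
        div_ne_zero (leadingCoeff_ne_zero.mpr (h0 b)) (leadingCoeff_ne_zero.mpr (h0 a))
      set x : ℂ[X] := f b - C c * f a with hxdef
      set g : Fin k → ℂ[X] := Function.update f b x with hg
      have hx0 : x ≠ 0 := by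
        intro hx
        have hsum' : ∑ i, (fun i => if i = b then (1:ℂ) else if i = a then -c else 0) i • f i
            = 0 := by
          have hterm : ∀ i : Fin k, (if i = b then (1:ℂ) else if i = a then -c else 0) • f i
              = (if i = b then f b else 0) + (if i = a then -(C c * f a) else 0) := by
            intro i
            by_cases h1 : i = b
            · subst h1; simp [if_neg (Ne.symm hab)]
            · by_cases h2 : i = a
              · subst h2; simp [if_neg h1, smul_eq_C_mul, map_neg]
              · simp [if_neg h1, if_neg h2]
          rw [Finset.sum_congr rfl fun i _ => hterm i, Finset.sum_add_distrib,
            Finset.sum_ite_eq' Finset.univ b (fun _ => f b),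
            Finset.sum_ite_eq' Finset.univ a (fun _ => -(C c * f a))]
          simp only [Finset.mem_univ, if_pos]
          rw [← sub_eq_add_neg, ← hxdef, hx]
        have := hlin _ hsum' b
        simp at this
      have hxfb : x.natDegree < (f b).natDegree := by
        refine natDegree_lt_natDegree hx0 ?_
        refine degree_sub_lt ?_ (h0 b) ?_
        · rw [degree_C_mul hca, degree_eq_natDegree (h0 a), degree_eq_natDegree (h0 b), hdab]
        · rw [leadingCoeff_mul, leadingCoeff_C, hc,
            div_mul_cancel₀ _ (leadingCoeff_ne_zero.mpr (h0 a))]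
      have hsum_g : ∑ i, (g i).natDegree < s := by
      -- sum with update
        have h1 : ∀ i, (g i).natDegree = Function.update (fun i => (f i).natDegree) b
            x.natDegree i := by
          intro i
          by_cases hib : i = b
          · subst hib; simp [hg]
          · simp [hg, Function.update_of_ne hib]
        rw [Finset.sum_congr rfl fun i _ => h1 i, Finset.sum_update_of_mem (Finset.mem_univ b)]
        rw [Finset.sum_eq_sum_sdiff_singleton_add (Finset.mem_univ b)
          (fun i => (f i).natDegree)] at hs
        omega
      have hgind : LinearIndependent ℂ g := by
        rw [Fintype.linearIndependent_iff]
        intro t ht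
        set h' : Fin k → ℂ := fun i => if i = a then t a - t b * c else t i with hh
        have key : ∑ i, h' i • f i = ∑ i, t i • g i := by
          have hterm : ∀ i : Fin k, t i • g i = h' i • f i
              + (if i = b then (-(t b * c)) • f a else 0)
              - (if i = a then (-(t b * c)) • f a else 0) := by
            intro i
            by_cases h1 : i = b
            · subst h1
              simp only [hh, if_neg (Ne.symm hab), if_pos rfl, hg, Function.update_self, hxdef,
                smul_eq_C_mul, map_neg, map_mul, if_true]
              ring
            · by_cases h2 : i = a
              · subst h2
                simp only [hh, if_pos rfl, if_neg h1, hg, Function.update_of_ne h1,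
                  smul_eq_C_mul, map_neg, map_mul, map_sub, if_true]
                ring
              · simp [hh, if_neg h1, if_neg h2, hg, Function.update_of_ne h1]
          rw [Finset.sum_congr rfl fun i _ => hterm i]
          rw [Finset.sum_sub_distrib, Finset.sum_add_distrib,
            Finset.sum_ite_eq' Finset.univ b (fun _ => (-(t b * c)) • f a),
            Finset.sum_ite_eq' Finset.univ a (fun _ => (-(t b * c)) • f a)]
          simp
        have hz := hlin h' (by rw [key, ht])
        intro i
        by_cases h2 : i = a
        · have hza := hz a
          have hzb := hz b
          rw [hh] at hza hzb
          simp only [if_pos rfl] at hza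
          simp only [if_neg (Ne.symm hab)] at hzb
          rw [hzb] at hza
          rw [h2]
          simpa using hza
        · have := hz i
          rw [hh] at this
          simpa [if_neg h2] using this
      have hwr : wr g = wr f := by
        have hrow : (fun j : Fin k => derivative^[(j:ℕ)] x)
            = (wrM f) b + (-(C c)) • (wrM f) a := by
          funext j
          simp [wrM, hxdef, iterate_derivative_sub, iterate_derivative_C_mul, neg_mul,
            sub_eq_add_neg]
        rw [wr, wr, hg, wrM_update, hrow, Matrix.det_updateRow_add,
          Matrix.det_updateRow_smul, Matrix.updateRow_eq_self,
          Matrix.det_updateRow_eq_zero hab, mul_zero, add_zero]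
      rw [← hwr]
      exact IH _ (by omega) g rfl hgind

lemma wr_ne_zero {k : ℕ} (f : Fin k → ℂ[X]) (hf : LinearIndependent ℂ f) : wr f ≠ 0 :=
  wr_ne_zero_aux _ f rfl hf

lemma isCoprime_X_sub_C' {a b : ℂ} (hab : a ≠ b) : IsCoprime (X - C a : ℂ[X]) (X - C b) := by
  refine ⟨C ((b - a)⁻¹), -C ((b - a)⁻¹), ?_⟩
  have : (X - C a : ℂ[X]) - (X - C b) = C (b - a) := by
    rw [map_sub]; ring
  rw [neg_mul, ← sub_eq_add_neg, ← mul_sub, this, ← map_mul,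
    inv_mul_cancel₀ (sub_ne_zero.mpr (Ne.symm hab)), map_one]

lemma pow_sub_dvd_derivative {a : ℂ} {p : ℂ[X]} {e : ℕ} (h : (X - C a) ^ e ∣ p) :
    (X - C a) ^ (e - 1) ∣ derivative p := by
  rcases Nat.eq_zero_or_pos e with he | he
  · simp [he]
  obtain ⟨u, rfl⟩ := h
  rw [derivative_mul, derivative_pow]
  refine dvd_add (Dvd.dvd.mul_right ?_ u) (Dvd.dvd.mul_right ?_ (derivative u))
  · exact Dvd.dvd.mul_right (dvd_mul_left _ _) _
  · exact pow_dvd_pow _ (by omega)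

lemma pow_sub_dvd_iterate_derivative {a : ℂ} {p : ℂ[X]} {e : ℕ} (h : (X - C a) ^ e ∣ p)
    (t : ℕ) : (X - C a) ^ (e - t) ∣ derivative^[t] p := by
  induction t generalizing p e with
  | zero => simpa using h
  | succ t ih =>
    rw [Function.iterate_succ_apply]
    have := ih (pow_sub_dvd_derivative h)
    rwa [show e - 1 - t = e - (t+1) by omega] at this

noncomputable def qpart (c : ℕ) (p : ℂ[X]) : ℂ[X] :=
  ∏ a ∈ p.roots.toFinset, (X - C a) ^ (p.rootMultiplicity a - c)

lemma qpart_ne_zero (c : ℕ) (p : ℂ[X]) : qpart c p ≠ 0 :=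
  Finset.prod_ne_zero_iff.mpr fun a _ => pow_ne_zero _ (X_sub_C_ne_zero a)

lemma qpart_pairwise_coprime (c : ℕ) (p : ℂ[X]) :
    (↑p.roots.toFinset : Set ℂ).Pairwise
      (Function.onFun IsCoprime fun a => ((X : ℂ[X]) - C a) ^ (p.rootMultiplicity a - c)) :=
  fun a _ b _ hab => ((isCoprime_X_sub_C' hab).pow)

lemma qpart_dvd_iterate (c : ℕ) (p : ℂ[X]) {t : ℕ} (ht : t ≤ c) :
    qpart c p ∣ derivative^[t] p := by
  refine Finset.prod_dvd_of_coprime (qpart_pairwise_coprime c p) fun a _ => ?_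
  refine dvd_trans (pow_dvd_pow _ (show p.rootMultiplicity a - c ≤ p.rootMultiplicity a - t
    by omega)) ?_
  exact pow_sub_dvd_iterate_derivative (p.pow_rootMultiplicity_dvd a) t

lemma qpart_dvd_self (c : ℕ) (p : ℂ[X]) : qpart c p ∣ p := by
  simpa using qpart_dvd_iterate (c := c) (p := p) (t := 0) (Nat.zero_le c)

lemma natDegree_qpart (c : ℕ) (p : ℂ[X]) :
    (qpart c p).natDegree = ∑ a ∈ p.roots.toFinset, (p.rootMultiplicity a - c) := by
  rw [qpart, natDegree_prod _ _ fun a _ => pow_ne_zero _ (X_sub_C_ne_zero a)]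
  refine Finset.sum_congr rfl fun a _ => ?_
  rw [natDegree_pow, natDegree_X_sub_C, mul_one]

lemma natDegree_le_qpart (c : ℕ) {p : ℂ[X]} (hp : p ≠ 0) :
    p.natDegree ≤ (qpart c p).natDegree + c * p.roots.toFinset.card := by
  have hcard : p.roots.card = p.natDegree :=
    IsAlgClosed.card_roots_eq_natDegree
  have hsum : ∑ a ∈ p.roots.toFinset, p.rootMultiplicity a = p.natDegree := by
    rw [← hcard, ← Multiset.toFinset_sum_count_eq p.roots]
    exact Finset.sum_congr rfl fun a _ => (count_roots p).symm
  calc p.natDegree = ∑ a ∈ p.roots.toFinset, p.rootMultiplicity a := hsum.symm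
  _ ≤ ∑ a ∈ p.roots.toFinset, ((p.rootMultiplicity a - c) + c) :=
      Finset.sum_le_sum fun a _ => by omega
  _ = (qpart c p).natDegree + c * p.roots.toFinset.card := by
      rw [Finset.sum_add_distrib, natDegree_qpart, Finset.sum_const, smul_eq_mul, mul_comm]


lemma coprime_roots_disjoint {p q : ℂ[X]} (h : IsCoprime p q) :
    Disjoint p.roots.toFinset q.roots.toFinset := by
  rw [Finset.disjoint_left]
  intro a hap haq
  rw [Multiset.mem_toFinset, mem_roots'] at hap haq
  obtain ⟨u, v, huv⟩ := h
  have h1 : eval a p = 0 := hap.2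
  have h2 : eval a q = 0 := haq.2
  have := congrArg (Polynomial.eval a) huv
  rw [eval_add, eval_mul, eval_mul, h1, h2, eval_one] at this
  simp at this

lemma rdeg_prod {ι : Type*} (s : Finset ι) (f : ι → ℂ[X]) (h0 : ∀ i ∈ s, f i ≠ 0)
    (hcop : (↑s : Set ι).Pairwise (Function.onFun IsCoprime f)) :
    rdeg (∏ i ∈ s, f i) = ∑ i ∈ s, rdeg (f i) := by
  induction s using Finset.cons_induction with
  | empty => simp [rdeg]
  | cons a s ha ih =>
    have hprodne : ∏ i ∈ s, f i ≠ 0 :=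
      Finset.prod_ne_zero_iff.mpr fun i hi => h0 i (Finset.mem_cons_of_mem hi)
    have hane : f a ≠ 0 := h0 a (Finset.mem_cons_self a s)
    have hcops : IsCoprime (f a) (∏ i ∈ s, f i) := by
      refine IsCoprime.prod_right fun i hi => ?_
      exact hcop (by simp) (by simp [hi]) (by rintro rfl; exact ha hi)
    rw [Finset.prod_cons, Finset.sum_cons, rdeg, roots_mul (mul_ne_zero hane hprodne),
      Multiset.toFinset_add, Finset.card_union_of_disjoint (coprime_roots_disjoint hcops),
      ← ih (fun i hi => h0 i (Finset.mem_cons_of_mem hi))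
        (hcop.mono (by simp [Finset.coe_subset]))]
    rfl

lemma rdeg_pos {p : ℂ[X]} (hp : p.natDegree ≠ 0) : 1 ≤ rdeg p := by
  have hp0 : p ≠ 0 := fun h => hp (by simp [h])
  have hdeg : p.degree ≠ 0 := by
    rw [degree_eq_natDegree hp0]
    exact_mod_cast fun h => hp (by exact_mod_cast h)
  obtain ⟨z, hz⟩ := IsAlgClosed.exists_root p hdeg
  refine Finset.card_pos.mpr ⟨z, ?_⟩
  rw [Multiset.mem_toFinset, mem_roots']
  exact ⟨hp0, hz⟩

lemma numeric_lemma {k n R' R D : ℚ} (hk : 3 ≤ k) (hkn : k + 1 ≤ n)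
    (h1 : k - 1 ≤ R') (h2 : R' + (n - k - 1) ≤ R)
    (hD : D ≤ (k - 2) * (R' - (k - 1) / 2)) :
    D ≤ (n - 2) * (R - (n - 1) / 2) := by
  nlinarith [mul_nonneg (sub_nonneg.mpr (by linarith : (1:ℚ) ≤ n - k))
      (sub_nonneg.mpr h1),
    mul_nonneg (sub_nonneg.mpr (by linarith : (0:ℚ) ≤ n - k - 1))
      (by linarith : (0:ℚ) ≤ n + k - 4),
    mul_nonneg (sub_nonneg.mpr (by linarith : (0:ℚ) ≤ n - 2))
      (sub_nonneg.mpr h2)]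

lemma dvd_det_of_dvd_row {k : ℕ} (M : Matrix (Fin k) (Fin k) ℂ[X]) (r : Fin k) (q : ℂ[X])
    (h : ∀ j, q ∣ M r j) : q ∣ M.det := by
  choose v hv using h
  have hM : M = M.updateRow r (q • v) := by
    ext i j
    by_cases hir : i = r
    · subst hir
      rw [Matrix.updateRow_self]
      simp only [Pi.smul_apply, smul_eq_mul]
      exact (hv j).symm ▸ rfl
    · rw [Matrix.updateRow_ne hir]
  have : M.det = q * (M.updateRow r v).det := by
    conv_lhs => rw [hM]
    rw [Matrix.det_updateRow_smul]
  rw [this]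
  exact dvd_mul_right q _

lemma core_ineq (k : ℕ) (hk : 2 ≤ k) (f : Fin (k+1) → ℂ[X]) (m : Fin (k+1))
    (hf0 : ∀ i, f i ≠ 0)
    (hcop : ∀ i j, i ≠ j → IsCoprime (f i) (f j))
    (hsum : ∑ i, f i = 0)
    (hind : LinearIndependent ℂ (fun i : Fin k => f (m.succAbove i))) :
    (f m).natDegree + (∑ j : Fin k, (j : ℕ)) ≤ (k - 1) * ∑ j, rdeg (f j) := by
  classical
  set F : Fin k → ℂ[X] := fun i => f (m.succAbove i) with hF
  set M : Matrix (Fin k) (Fin k) ℂ[X] := wrM F with hM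
  have hW : wr F ≠ 0 := wr_ne_zero F hind
  set q : Fin (k+1) → ℂ[X] := fun j => qpart (k-1) (f j) with hq
  have hq0 : ∀ j, q j ≠ 0 := fun j => qpart_ne_zero _ _
  have hjk : ∀ j : Fin k, (j : ℕ) ≤ k - 1 := fun j => by omega
  have hqcop : ∀ a b : Fin (k+1), a ≠ b → IsCoprime (q a) (q b) := fun a b hab =>
    ((hcop a b hab).of_isCoprime_of_dvd_left (qpart_dvd_self _ _)).of_isCoprime_of_dvd_right
      (qpart_dvd_self _ _)
  -- rows divisibility
  have hrowdvd : ∀ i : Fin k, q (m.succAbove i) ∣ wr F := by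
    intro i
    refine dvd_det_of_dvd_row M i _ fun j => ?_
    exact qpart_dvd_iterate _ _ (hjk j)
  -- q m divides via row replacement
  have hFsum : ∑ i, F i = -f m := by
    have := Fin.sum_univ_succAbove f m
    rw [hsum] at this
    linear_combination -this
  have hqmdvd : q m ∣ wr F := by
    have r0 : Fin k := ⟨0, by omega⟩
    have hrow : (fun j : Fin k => derivative^[(j:ℕ)] (-f m)) = ∑ i, (1:ℂ[X]) • M i := by
      funext j
      rw [← hFsum, iterate_derivative_sum]
      simp [hM, wrM, Finset.sum_apply]
      show _ = (∑ x, (fun jj : Fin k => derivative^[(jj:ℕ)] (F x))) j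
      rw [Finset.sum_apply]
    have hdet : (M.updateRow r0 (fun j : Fin k => derivative^[(j:ℕ)] (-f m))).det
        = (1:ℂ[X]) • M.det := by
      rw [hrow, Matrix.det_updateRow_sum]
    have hdvd : q m ∣ (M.updateRow r0 (fun j : Fin k => derivative^[(j:ℕ)] (-f m))).det := by
      refine dvd_det_of_dvd_row _ r0 _ fun j => ?_
      rw [Matrix.updateRow_self]
      rw [iterate_derivative_neg, dvd_neg]
      exact qpart_dvd_iterate _ _ (hjk j)
    rw [hdet, one_smul] at hdvd
    exact hdvd
  -- product divides
  have hQ : (∏ j, q j) ∣ wr F := by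
    rw [Fin.prod_univ_succAbove q m]
    refine IsCoprime.mul_dvd ?_ hqmdvd ?_
    · exact IsCoprime.prod_right fun i _ => hqcop m (m.succAbove i) (Fin.ne_succAbove m i)
    · refine Finset.prod_dvd_of_coprime ?_ fun i _ => hrowdvd i
      intro a _ b _ hab
      exact hqcop _ _ (fun h => hab (Fin.succAbove_right_injective h))
  -- degree bounds
  have hdegq : ∑ j, (q j).natDegree ≤ (wr F).natDegree := by
    rw [← natDegree_prod _ _ fun j _ => hq0 j]
    exact natDegree_le_of_dvd hQ hW
  have hdegW : (wr F).natDegree + (∑ j : Fin k, (j:ℕ)) ≤ ∑ i, (F i).natDegree := by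
    set M' : Matrix (Fin k) (Fin k) ℂ[X] :=
      M * Matrix.diagonal (fun j : Fin k => (X : ℂ[X]) ^ (j : ℕ)) with hM'
    have hbd : ∀ i j, (M' i j).natDegree ≤ (F i).natDegree := by
      intro i j
      have happ : M' i j = derivative^[(j : ℕ)] (F i) * X ^ (j : ℕ) := by
        rw [hM', Matrix.mul_diagonal]; rfl
      rw [happ]
      by_cases hj : (j : ℕ) ≤ (F i).natDegree
      · refine natDegree_mul_le.trans ?_
        have h2 := natDegree_iterate_derivative (F i) (j : ℕ)
        rw [natDegree_X_pow]
        omega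
      · rw [iterate_derivative_eq_zero (by omega), zero_mul, natDegree_zero]
        exact Nat.zero_le _
    have h1 : (M'.det).natDegree ≤ ∑ i, (F i).natDegree := natDegree_det_le M' _ hbd
    have h2 : M'.det = wr F * X ^ (∑ j : Fin k, (j:ℕ)) := by
      rw [hM', Matrix.det_mul, Matrix.det_diagonal, Finset.prod_pow_eq_pow_sum]
      rfl
    rw [h2, natDegree_mul hW (pow_ne_zero _ X_ne_zero), natDegree_X_pow] at h1
    exact h1
  have hdegf : ∀ j, (f j).natDegree ≤ (q j).natDegree + (k-1) * rdeg (f j) :=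
    fun j => natDegree_le_qpart (k-1) (hf0 j)
  -- assemble
  have hsplit : ∑ j, (f j).natDegree = (f m).natDegree + ∑ i, (F i).natDegree :=
    Fin.sum_univ_succAbove _ m
  have hsum_le : ∑ j, (f j).natDegree
      ≤ ∑ j, (q j).natDegree + (k-1) * ∑ j, rdeg (f j) := by
    rw [Finset.mul_sum, ← Finset.sum_add_distrib]
    exact Finset.sum_le_sum fun j _ => hdegf j
  set P := (k - 1) * ∑ j, rdeg (f j) with hP
  omega

lemma rdeg_card_bound {n : ℕ} (f : Fin n → ℂ[X])
    (hone : {i : Fin n | (f i).natDegree = 0}.Subsingleton) (s : Finset (Fin n)) :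
    s.card ≤ 1 + ∑ i ∈ s, rdeg (f i) := by
  classical
  set Cs := s.filter (fun i => (f i).natDegree = 0) with hCs
  have hC1 : Cs.card ≤ 1 := by
    refine Finset.card_le_one.mpr fun a ha b hb => ?_
    exact hone (Finset.mem_filter.mp ha).2 (Finset.mem_filter.mp hb).2
  have h2 : (s \ Cs).card ≤ ∑ i ∈ s \ Cs, rdeg (f i) := by
    calc (s \ Cs).card = ∑ _i ∈ s \ Cs, 1 := by simp
    _ ≤ _ := Finset.sum_le_sum fun i hi => rdeg_pos (by
        have h := Finset.mem_sdiff.mp hi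
        exact fun h0 => h.2 (Finset.mem_filter.mpr ⟨h.1, h0⟩))
  have h3 : ∑ i ∈ s \ Cs, rdeg (f i) ≤ ∑ i ∈ s, rdeg (f i) :=
    Finset.sum_le_sum_of_subset Finset.sdiff_subset
  have h4 : Cs.card ≤ s.card := Finset.card_le_card (Finset.filter_subset _ _)
  have h5 : (s \ Cs).card = s.card - Cs.card := Finset.card_sdiff_of_subset (Finset.filter_subset _ _)
  omega

lemma main_aux : ∀ n : ℕ, 3 ≤ n → ∀ f : Fin n → ℂ[X],
    (∀ i j, i ≠ j → IsCoprime (f i) (f j)) →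
    ({i : Fin n | (f i).natDegree = 0}.Subsingleton) →
    (¬ ∀ i, (f i).natDegree = 0) →
    (∑ i, f i = 0) →
    ∀ m, ((f m).natDegree : ℚ) ≤ ((n:ℚ) - 2) * ((rdeg (∏ i, f i) : ℚ) - ((n:ℚ)-1)/2) := by
  intro n
  induction n using Nat.strong_induction_on with
  | _ n IH =>
  intro hn f hcop hone hconst hsum m
  classical
  have hf0 : ∀ i, f i ≠ 0 := by
    intro i h0
    obtain ⟨j, hj, l, hl, hjl⟩ := Finset.one_lt_card.mp
      (show 1 < ({i}ᶜ : Finset (Fin n)).card by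
        rw [Finset.card_compl, Fintype.card_fin, Finset.card_singleton]; omega)
    have hj' : j ≠ i := by simpa using hj
    have hl' : l ≠ i := by simpa using hl
    have hcj : (f j).natDegree = 0 := natDegree_eq_zero_of_isUnit
      (isCoprime_zero_left.mp (h0 ▸ hcop i j (Ne.symm hj')))
    have hcl : (f l).natDegree = 0 := natDegree_eq_zero_of_isUnit
      (isCoprime_zero_left.mp (h0 ▸ hcop i l (Ne.symm hl')))
    exact hjl (hone hcj hcl)
  have hprodne : (∏ i, f i) ≠ 0 := Finset.prod_ne_zero_iff.mpr fun i _ => hf0 i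
  have hrprod : rdeg (∏ i, f i) = ∑ i, rdeg (f i) :=
    rdeg_prod Finset.univ f (fun i _ => hf0 i) (fun a _ b hb hab => hcop a b hab)
  have hn3 : (3:ℚ) ≤ (n:ℚ) := by exact_mod_cast hn
  by_cases hm0 : (f m).natDegree = 0
  · -- trivial case
    rw [hm0]
    have h1 : n ≤ 1 + ∑ i, rdeg (f i) := by
      simpa using rdeg_card_bound f hone Finset.univ
    have h1' : (n:ℚ) ≤ 1 + ∑ i, (rdeg (f i) : ℚ) := by exact_mod_cast h1
    rw [hrprod]
    push_cast
    nlinarith [h1', hn3]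
  · -- main case
    set P : Finset (Fin n) → Prop := fun S => m ∈ S ∧ ∃ c : Fin n → ℂ,
      (∀ i ∈ S, c i ≠ 0) ∧ ∑ i ∈ S, c i • f i = 0 with hPdef
    have hPuniv : P Finset.univ :=
      ⟨Finset.mem_univ m, fun _ => 1, fun i _ => one_ne_zero, by simpa using hsum⟩
    obtain ⟨S, hSmem, hSmin⟩ := Finset.exists_min_image (Finset.univ.filter P) Finset.card
      ⟨Finset.univ, Finset.mem_filter.mpr ⟨Finset.mem_univ _, hPuniv⟩⟩
    rw [Finset.mem_filter] at hSmem
    obtain ⟨hmS, c, hc0, hcsum⟩ := hSmem.2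
    have hSmin' : ∀ S', P S' → S.card ≤ S'.card := fun S' h =>
      hSmin S' (Finset.mem_filter.mpr ⟨Finset.mem_univ _, h⟩)
    have hkey2 : ∀ a b : Fin n, a ≠ b → c b ≠ 0 →
        C (c a) * f a + C (c b) * f b = 0 → (f a).natDegree = 0 := by
      intro a b hab ha2 heq
      have hdvd : f a ∣ C (c b) * f b := by
        have h2 : C (c b) * f b = (-(C (c a))) * f a := by linear_combination heq
        rw [h2]
        exact Dvd.dvd.mul_left dvd_rfl _
      have hdvd2 : f a ∣ C (c b) := (hcop a b hab).dvd_of_dvd_mul_right hdvd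
      have hle := natDegree_le_of_dvd hdvd2 (C_ne_zero.mpr ha2)
      rw [natDegree_C] at hle
      omega
    have hS3 : 3 ≤ S.card := by
      by_contra hlt
      push_neg at hlt
      have hpos : 0 < S.card := Finset.card_pos.mpr ⟨m, hmS⟩
      have : S.card = 1 ∨ S.card = 2 := by omega
      rcases this with h1 | h2
      · obtain ⟨x, hx⟩ := Finset.card_eq_one.mp h1
        have hmx : m = x := by rw [hx] at hmS; simpa using hmS
        rw [hx, Finset.sum_singleton] at hcsum
        have := smul_eq_zero.mp hcsum
        rcases this with h | h
        · exact hc0 x (by rw [hx]; simp) h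
        · exact hf0 x h
      · obtain ⟨x, y, hxy, hSxy⟩ := Finset.card_eq_two.mp h2
        rw [hSxy, Finset.sum_pair hxy] at hcsum
        rw [smul_eq_C_mul, smul_eq_C_mul] at hcsum
        have hmxy : m = x ∨ m = y := by
          rw [hSxy] at hmS; simpa using hmS
        have hcx : c x ≠ 0 := hc0 x (by rw [hSxy]; simp)
        have hcy : c y ≠ 0 := hc0 y (by rw [hSxy]; simp)
        rcases hmxy with rfl | rfl
        · exact hm0 (hkey2 m y hxy hcy hcsum)
        · exact hm0 (hkey2 m x (Ne.symm hxy) hcx (by linear_combination hcsum))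
    have hSlen : S.card ≤ n := by
      simpa using Finset.card_le_univ S
    rcases lt_or_eq_of_le hSlen with hSn | hSn
    · -- case S.card < n : apply induction hypothesis
      set k' := S.card with hk'
      set e : Fin k' ≃ {x // x ∈ S} := S.equivFin.symm with he
      set g : Fin k' → ℂ[X] := fun i => C (c ((e i) : Fin n)) * f ((e i) : Fin n) with hg
      have hginj : ∀ i j : Fin k', ((e i) : Fin n) = ((e j) : Fin n) → i = j := fun i j h =>
        e.injective (Subtype.ext h)
      have hce : ∀ i : Fin k', c ((e i) : Fin n) ≠ 0 := fun i => hc0 _ (e i).2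
      have hdg : ∀ i, (g i).natDegree = (f ((e i) : Fin n)).natDegree := fun i =>
        natDegree_C_mul (hce i)
      have hcop' : ∀ i j, i ≠ j → IsCoprime (g i) (g j) := by
        intro i j hij
        rw [hg]
        dsimp only
        rw [isCoprime_mul_unit_left_left (isUnit_C.mpr (isUnit_iff_ne_zero.mpr (hce i))),
          isCoprime_mul_unit_left_right (isUnit_C.mpr (isUnit_iff_ne_zero.mpr (hce j)))]
        exact hcop _ _ fun h => hij (hginj i j h)
      have hone' : {i : Fin k' | (g i).natDegree = 0}.Subsingleton := by
        intro i hi j hj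
        refine hginj i j (hone ?_ ?_)
        · rw [Set.mem_setOf_eq] at hi ⊢; rw [← hdg i]; exact hi
        · rw [Set.mem_setOf_eq] at hj ⊢; rw [← hdg j]; exact hj
      have hconst' : ¬ ∀ i, (g i).natDegree = 0 := by
        intro hall
        obtain ⟨x, hx, y, hy, hxy⟩ := Finset.one_lt_card.mp (show 1 < S.card by omega)
        have hgx : (f x).natDegree = 0 := by
          have := hall (e.symm ⟨x, hx⟩)
          rwa [hdg, Equiv.apply_symm_apply] at this
        have hgy : (f y).natDegree = 0 := by
          have := hall (e.symm ⟨y, hy⟩)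
          rwa [hdg, Equiv.apply_symm_apply] at this
        exact hxy (hone hgx hgy)
      have hsum' : ∑ i, g i = 0 := by
        rw [hg]
        calc ∑ i : Fin k', C (c ((e i) : Fin n)) * f ((e i) : Fin n)
            = ∑ x : {x // x ∈ S}, C (c (x : Fin n)) * f (x : Fin n) :=
              Equiv.sum_comp e (fun x : {x // x ∈ S} => C (c (x : Fin n)) * f (x : Fin n))
        _ = ∑ x ∈ S, C (c x) * f x := Finset.sum_coe_sort S (fun x => C (c x) * f x)
        _ = ∑ x ∈ S, c x • f x := by
              refine Finset.sum_congr rfl fun x _ => ?_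
              rw [smul_eq_C_mul]
        _ = 0 := hcsum
      have ihm := IH k' hSn (by omega) g hcop' hone' hconst' hsum' (e.symm ⟨m, hmS⟩)
      have hdm : (g (e.symm ⟨m, hmS⟩)).natDegree = (f m).natDegree := by
        rw [hdg, Equiv.apply_symm_apply]
      have hprodg : ∏ i, g i = C (∏ x ∈ S, c x) * ∏ x ∈ S, f x := by
        rw [hg]
        calc ∏ i : Fin k', C (c ((e i) : Fin n)) * f ((e i) : Fin n)
            = ∏ x : {x // x ∈ S}, C (c (x : Fin n)) * f (x : Fin n) :=
              Equiv.prod_comp e (fun x : {x // x ∈ S} => C (c (x : Fin n)) * f (x : Fin n))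
        _ = ∏ x ∈ S, (C (c x) * f x) := Finset.prod_coe_sort S (fun x => C (c x) * f x)
        _ = C (∏ x ∈ S, c x) * ∏ x ∈ S, f x := by
              rw [Finset.prod_mul_distrib, map_prod]
      have hrg : rdeg (∏ i, g i) = rdeg (∏ x ∈ S, f x) := by
        rw [hprodg, rdeg, rdeg,
          roots_C_mul _ (Finset.prod_ne_zero_iff.mpr fun x hx => hc0 x hx)]
      have hrS : rdeg (∏ x ∈ S, f x) = ∑ x ∈ S, rdeg (f x) :=
        rdeg_prod S f (fun i _ => hf0 i) (fun a _ b _ hab => hcop a b hab)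
      rw [hdm, hrg, hrS] at ihm
      -- numeric conversion
      have hR'1 : (k' : ℚ) - 1 ≤ (∑ x ∈ S, rdeg (f x) : ℚ) := by
        have := rdeg_card_bound f hone S
        have h := (Nat.cast_le (α := ℚ)).mpr this
        push_cast at h ⊢
        linarith
      have hR'2 : (∑ x ∈ S, (rdeg (f x)) : ℚ) + ((n:ℚ) - (k':ℚ) - 1)
          ≤ ((rdeg (∏ i, f i) : ℚ)) := by
        have hsplit : ∑ i ∈ Finset.univ \ S, rdeg (f i) + ∑ i ∈ S, rdeg (f i)
            = ∑ i, rdeg (f i) := Finset.sum_sdiff (Finset.subset_univ S)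
        have hcard : (Finset.univ \ S).card = n - k' := by
          rw [Finset.card_sdiff_of_subset (Finset.subset_univ S)]
          simp [hk']
        have hb := rdeg_card_bound f hone (Finset.univ \ S)
        rw [hcard] at hb
        rw [hrprod]
        have hb' : ((n - k' : ℕ) : ℚ) ≤ 1 + ∑ i ∈ Finset.univ \ S, (rdeg (f i) : ℚ) := by
          exact_mod_cast hb
        rw [Nat.cast_sub (le_of_lt hSn)] at hb'
        have hsplit' : (∑ i ∈ Finset.univ \ S, (rdeg (f i) :ℚ)) + ∑ i ∈ S, (rdeg (f i) : ℚ)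
            = ∑ i, (rdeg (f i) : ℚ) := by exact_mod_cast hsplit
        push_cast at *
        linarith
      refine numeric_lemma (by exact_mod_cast hS3) (by exact_mod_cast hSn) hR'1 hR'2 ?_
      push_cast at ihm ⊢
      exact ihm
    · -- case S.card = n : core case
      have hSuniv : S = Finset.univ := Finset.eq_univ_of_card S (by rw [hSn]; simp)
      -- full independence property
      have hfull : ∀ eℂ : Fin n → ℂ, eℂ m = 0 → ∑ j, eℂ j • f j = 0 → eℂ = 0 := by
        intro eℂ hem hesum
        by_contra hne
        obtain ⟨t, ht⟩ := Function.ne_iff.mp hne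
        have htm : t ≠ m := by rintro rfl; exact ht hem
        set h' : Fin n → ℂ := fun j => 1 - (eℂ t)⁻¹ * eℂ j with hh'
        have hsum'' : ∑ j, h' j • f j = 0 := by
          have : ∀ j, h' j • f j = f j - (eℂ t)⁻¹ • (eℂ j • f j) := by
            intro j
            rw [hh']
            rw [sub_smul, one_smul, smul_smul]
          rw [Finset.sum_congr rfl fun j _ => this j, Finset.sum_sub_distrib,
            ← Finset.smul_sum, hsum, hesum, smul_zero, sub_zero]
        set S' := Finset.univ.filter (fun j => h' j ≠ 0) with hS'
        have hPS' : P S' := by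
          refine ⟨?_, h', fun i hi => (Finset.mem_filter.mp hi).2, ?_⟩
          · refine Finset.mem_filter.mpr ⟨Finset.mem_univ _, ?_⟩
            rw [hh']
            simp [hem]
          · rw [Finset.sum_filter_of_ne fun j _ hj => ?_]
            · exact hsum''
            · intro h0
              exact hj (by rw [h0, zero_smul])
        have hcard : S'.card < n := by
          have ht0 : eℂ t ≠ 0 := ht
          have hht : h' t = 0 := by
            rw [hh']
            dsimp only
            rw [inv_mul_cancel₀ ht0, sub_self]
          have htS' : t ∉ S' := by
            rw [hS', Finset.mem_filter]
            rintro ⟨-, hh⟩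
            exact hh hht
          have : S' ⊂ Finset.univ := Finset.ssubset_univ_iff.mpr fun h => htS' (h ▸ Finset.mem_univ t)
          have := Finset.card_lt_card this
          simpa using this
        have := hSmin' S' hPS'
        omega
      -- set up core lemma
      obtain ⟨k, rfl⟩ : ∃ k, n = k + 1 := ⟨n - 1, by omega⟩
      have hind : LinearIndependent ℂ (fun i : Fin k => f (m.succAbove i)) := by
        rw [Fintype.linearIndependent_iff]
        intro gc hgc
        have h1 : (Fin.insertNth (α := fun _ => ℂ) m 0 gc) m = 0 := by simp
        have h3 : ∀ i : Fin k, (Fin.insertNth (α := fun _ => ℂ) m 0 gc) (m.succAbove i) = gc i := fun i =>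
          Fin.insertNth_apply_succAbove (α := fun _ => ℂ) m 0 gc i
        have h2 : ∑ j, (Fin.insertNth (α := fun _ => ℂ) m 0 gc) j • f j = 0 := by
          rw [Fin.sum_univ_succAbove (fun j => (Fin.insertNth (α := fun _ => ℂ) m 0 gc) j • f j) m]
          rw [h1, zero_smul, zero_add, Finset.sum_congr rfl fun i _ => by rw [h3 i]]
          exact hgc
        have h4 := hfull _ h1 h2
        intro i
        rw [← h3 i, h4]
        rfl
      have hcore := core_ineq k (by omega) f m hf0 hcop hsum hind
      -- final numeric computation
      have hT : (∑ j : Fin k, (j : ℕ)) * 2 = k * (k - 1) := by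
        rw [Fin.sum_univ_eq_sum_range (fun x => x) k]
        rw [Finset.sum_range_id_mul_two]
      rw [hrprod]
      have hcast : ((f m).natDegree : ℚ) + ((∑ j : Fin k, (j:ℕ) : ℕ) : ℚ)
          ≤ ((k:ℚ) - 1) * ∑ j, (rdeg (f j) : ℚ) := by
        have := (Nat.cast_le (α := ℚ)).mpr hcore
        push_cast at this ⊢
        rw [Nat.cast_sub (by omega : 1 ≤ k)] at this
        push_cast at this
        linarith
      have hT' : ((∑ j : Fin k, (j:ℕ) : ℕ) : ℚ) * 2 = (k:ℚ) * ((k:ℚ) - 1) := by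
        have h1 : ((∑ j : Fin k, (j:ℕ) : ℕ) : ℚ) * 2 = ((k * (k-1) : ℕ) : ℚ) := by
          exact_mod_cast congrArg (Nat.cast : ℕ → ℚ) hT
        rw [Nat.cast_mul, Nat.cast_sub (by omega : 1 ≤ k), Nat.cast_one] at h1
        exact h1
      push_cast
      ring_nf
      ring_nf at hcast hT'
      linarith [hcast, hT']


theorem stmt3 (n : ℕ) (hn : 3 ≤ n) (f : Fin n → ℂ[X])
    (hcop : ∀ i j, i ≠ j → IsCoprime (f i) (f j))
    (hone : {i : Fin n | (f i).natDegree = 0}.Subsingleton)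
    (hconst : ¬ ∀ i, (f i).natDegree = 0)
    (hsum : ∑ i, f i = 0) :
    ∀ m, ((f m).natDegree : ℚ) ≤
      ((n : ℚ) - 2) * ((rdeg (∏ i, f i) : ℚ) - ((n : ℚ) - 1) / 2) := by
  intro m
  exact main_aux n hn f hcop hone hconst hsum m
end

section
/- Let n ≥ 3 and g₁, …, gₙ be pairwise relatively prime nonzero univariate polynomials over ℂ, not all constant, and e₁, …, eₙ positive integers with g₁^{e₁} + g₂^{e₂} + ⋯ + gₙ^{eₙ} = 0. Suppose g₁^{e₁}, …, g_{n−1}^{e_{n−1}} are linearly independent over ℂ. Then 1/e₁ + 1/e₂ + ⋯ + 1/eₙ > 1/(n−2). -/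
open Polynomial Matrix Finset

namespace Stmt9Aux

/-- g^(e-j) divides the j-th iterated derivative of g^e. -/
lemma pow_dvd_iterate_derivative (g : ℂ[X]) (e j : ℕ) :
    g ^ (e - j) ∣ derivative^[j] (g ^ e) := by
  induction j with
  | zero => simp
  | succ j ih =>
    obtain ⟨q, hq⟩ := ih
    rw [Function.iterate_succ_apply', hq, derivative_mul]
    rcases Nat.eq_zero_or_pos (e - j) with h | h
    · have h' : e - (j + 1) = 0 := by omega
      rw [h', pow_zero]; exact one_dvd _
    · have h' : e - j = (e - (j + 1)) + 1 := by omega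
      apply dvd_add
      · have h2 : e - j - 1 = e - (j + 1) := by omega
        rw [derivative_pow, h2]
        exact ((dvd_mul_left _ _).mul_right _).mul_right _
      · exact Dvd.dvd.mul_right (pow_dvd_pow g (by omega)) _

/-- If c divides every entry of a row of M, it divides det M. -/
lemma dvd_det_of_row_dvd {r : ℕ} (M : Matrix (Fin r) (Fin r) ℂ[X]) (i₀ : Fin r) (c : ℂ[X])
    (h : ∀ j, c ∣ M i₀ j) : c ∣ M.det := by
  choose q hq using h
  have hM : M = M.updateRow i₀ (c • q) := by
    ext i j
    rcases eq_or_ne i i₀ with rfl | hi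
    · simp [Matrix.updateRow_apply, Pi.smul_apply, smul_eq_mul, ← hq]
    · simp [Matrix.updateRow_apply, hi]
  rw [hM, Matrix.det_updateRow_smul]
  exact Dvd.intro _ rfl

/-- Two polynomials with zero Wronskian, first nonzero, are proportional. -/
lemma linear_of_wronskian_eq_zero {a b : ℂ[X]} (ha : a ≠ 0) (h : wronskian a b = 0) :
    ∃ l : ℂ, b = C l * a := by
  rcases eq_or_ne b 0 with rfl | hb
  · exact ⟨0, by simp⟩
  set d := GCDMonoid.gcd a b with hd
  have hd0 : d ≠ 0 := gcd_ne_zero_of_left ha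
  have ha1 : d * (a / d) = a := EuclideanDomain.mul_div_cancel' hd0 (gcd_dvd_left a b)
  have hb1 : d * (b / d) = b := EuclideanDomain.mul_div_cancel' hd0 (gcd_dvd_right a b)
  have hcop : IsCoprime (a / d) (b / d) := isCoprime_div_gcd_div_gcd hb
  have hw : wronskian (d * (a / d)) (d * (b / d)) = d * d * wronskian (a / d) (b / d) := by
    simp only [wronskian, derivative_mul]
    ring
  rw [ha1, hb1, h] at hw
  have hw0 : wronskian (a / d) (b / d) = 0 := by
    rcases mul_eq_zero.mp hw.symm with h' | h'
    · exact absurd h' (mul_ne_zero hd0 hd0)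
    · exact h'
  obtain ⟨hda, hdb⟩ := hcop.wronskian_eq_zero_iff.mp hw0
  obtain ⟨α, hα⟩ := Polynomial.natDegree_eq_zero.mp (natDegree_eq_zero_of_derivative_eq_zero hda)
  obtain ⟨β, hβ⟩ := Polynomial.natDegree_eq_zero.mp (natDegree_eq_zero_of_derivative_eq_zero hdb)
  have hα0 : α ≠ 0 := by
    rintro rfl
    rw [map_zero] at hα
    rw [← ha1, ← hα, mul_zero] at ha
    exact ha rfl
  refine ⟨β / α, ?_⟩
  have hC : (C β : ℂ[X]) = C (β / α) * C α := by
    rw [← C_mul, div_mul_cancel₀ _ hα0]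
  rw [← ha1, ← hb1, ← hα, ← hβ, hC]
  ring

lemma det_wronskian_ne_zero : ∀ (r : ℕ) (f : Fin r → ℂ[X]),
    LinearIndependent ℂ f →
    (Matrix.of fun i j : Fin r => derivative^[(j : ℕ)] (f i)).det ≠ 0 := by
  intro r
  induction r with
  | zero => intro f _; simp [Matrix.det_fin_zero]
  | succ r ih =>
    intro f hf
    set M : Matrix (Fin (r+1)) (Fin (r+1)) ℂ[X] :=
      Matrix.of fun i j => derivative^[(j:ℕ)] (f i) with hM
    set M' : Matrix (Fin r) (Fin r) ℂ[X] :=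
      Matrix.of fun i j => derivative^[(j:ℕ)] (f i.castSucc) with hM'
    have hM'det : M'.det ≠ 0 := ih _ (hf.comp Fin.castSucc (Fin.castSucc_injective r))
    intro hdet
    obtain ⟨c, hc0, hc⟩ := Matrix.exists_vecMul_eq_zero_iff.mpr hdet
    have hrel : ∀ j : Fin (r+1), ∑ i, c i * derivative^[(j:ℕ)] (f i) = 0 := by
      intro j
      have := congrFun hc j
      simpa [Matrix.vecMul, dotProduct, hM] using this
    have hlast : c (Fin.last r) ≠ 0 := by
      intro hcl
      have hker : (fun i : Fin r => c i.castSucc) = 0 := by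
        by_contra hne
        apply hM'det
        apply Matrix.exists_vecMul_eq_zero_iff.mp
        refine ⟨_, hne, funext fun j => ?_⟩
        have h1 := hrel j.castSucc
        rw [Fin.sum_univ_castSucc] at h1
        rw [hcl, zero_mul, add_zero] at h1
        simpa [Matrix.vecMul, dotProduct, hM'] using h1
      apply hc0
      funext i
      rcases Fin.eq_castSucc_or_eq_last i with ⟨i', rfl⟩ | rfl
      · exact congrFun hker i'
      · exact hcl
    have hrel' : ∀ j : Fin r, ∑ i, derivative (c i) * derivative^[(j:ℕ)] (f i) = 0 := by
      intro j
      have h1 := congrArg derivative (hrel j.castSucc)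
      rw [derivative_sum, derivative_zero] at h1
      simp only [derivative_mul] at h1
      rw [Finset.sum_add_distrib] at h1
      have h2 : ∑ i, c i * derivative (derivative^[(j.castSucc : ℕ)] (f i)) = 0 := by
        have h3 := hrel j.succ
        simp only [Fin.val_succ] at h3
        simp only [Fin.coe_castSucc, ← Function.iterate_succ_apply' derivative]
        exact h3
      rw [h2, add_zero] at h1
      simpa using h1
    set w : Fin (r+1) → ℂ[X] := fun i => wronskian (c (Fin.last r)) (c i) with hw
    have hwrel : ∀ j : Fin r, ∑ i, w i * derivative^[(j : ℕ)] (f i) = 0 := by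
      intro j
      have e1 : ∑ i, w i * derivative^[(j:ℕ)] (f i)
          = c (Fin.last r) * (∑ i, derivative (c i) * derivative^[(j:ℕ)] (f i))
            - derivative (c (Fin.last r)) * (∑ i, c i * derivative^[(j:ℕ)] (f i)) := by
        rw [Finset.mul_sum, Finset.mul_sum, ← Finset.sum_sub_distrib]
        apply Finset.sum_congr rfl
        intro i _
        simp only [hw, wronskian]
        ring
      have e2 : ∑ i, c i * derivative^[(j:ℕ)] (f i) = 0 := by
        have := hrel j.castSucc
        rwa [Fin.coe_castSucc] at this
      rw [e1, hrel' j, e2, mul_zero, mul_zero, sub_zero]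
    have hwz : ∀ i : Fin (r+1), w i = 0 := by
      have hker : (fun i : Fin r => w i.castSucc) = 0 := by
        by_contra hne
        apply hM'det
        apply Matrix.exists_vecMul_eq_zero_iff.mp
        refine ⟨_, hne, funext fun j => ?_⟩
        have h1 := hwrel j
        rw [Fin.sum_univ_castSucc] at h1
        have hwlast : w (Fin.last r) = 0 := wronskian_self_eq_zero _
        rw [hwlast, zero_mul, add_zero] at h1
        simpa [Matrix.vecMul, dotProduct, hM'] using h1
      intro i
      rcases Fin.eq_castSucc_or_eq_last i with ⟨i', rfl⟩ | rfl
      · exact congrFun hker i'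
      · exact wronskian_self_eq_zero _
    choose lam hlam using fun i => linear_of_wronskian_eq_zero hlast (hwz i)
    have hsum0 : ∑ i, lam i • f i = 0 := by
      have h0 := hrel 0
      simp only [Fin.val_zero, Function.iterate_zero, id_eq] at h0
      have h4 : c (Fin.last r) * ∑ i, C (lam i) * f i = 0 := by
        rw [Finset.mul_sum, ← h0]
        apply Finset.sum_congr rfl
        intro i _
        rw [hlam i]
        ring
      rcases mul_eq_zero.mp h4 with h' | h'
      · exact absurd h' hlast
      · simpa [smul_eq_C_mul] using h'
    have hall := Fintype.linearIndependent_iff.mp hf lam hsum0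
    apply hc0
    funext i
    simp [hlam i, hall i]

set_option maxHeartbeats 1000000 in
lemma natDegree_det_le {r : ℕ} (N : Matrix (Fin r) (Fin r) ℂ[X]) (D : Fin r → ℕ)
    (hN : ∀ i j, N i j ≠ 0 → (N i j).natDegree + (j : ℕ) ≤ D i) (hdet : N.det ≠ 0) :
    N.det.natDegree + (∑ j : Fin r, (j : ℕ)) ≤ ∑ i, D i := by
  set T := ∑ j : Fin r, (j:ℕ) with hT'
  set S := ∑ i, D i with hS'
  have key : ∀ σ : Equiv.Perm (Fin r), (∏ i, N (σ i) i) ≠ 0 →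
      (∏ i, N (σ i) i).natDegree + T ≤ S := by
    intro σ hσ
    have hfac : ∀ i : Fin r, N (σ i) i ≠ 0 := fun i =>
      Finset.prod_ne_zero_iff.mp hσ i (Finset.mem_univ i)
    rw [Polynomial.natDegree_prod _ _ (fun i _ => hfac i)]
    calc (∑ i, (N (σ i) i).natDegree) + T = ∑ i, ((N (σ i) i).natDegree + (i:ℕ)) := by
          rw [Finset.sum_add_distrib]
      _ ≤ ∑ i, D (σ i) := Finset.sum_le_sum fun i _ => hN (σ i) i (hfac i)
      _ = S := Equiv.sum_comp σ D
  have hT : T ≤ S := by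
    by_contra hTS
    apply hdet
    rw [Matrix.det_apply]
    apply Finset.sum_eq_zero
    intro σ _
    rcases eq_or_ne (∏ i, N (σ i) i) 0 with h0 | h0
    · rw [h0, smul_zero]
    · exact absurd (key σ h0) (by omega)
  have hd : N.det.natDegree ≤ S - T := by
    rw [Matrix.det_apply]
    refine Polynomial.natDegree_sum_le_of_forall_le _ _ (fun σ _ => ?_)
    have hb : (∏ i, N (σ i) i).natDegree ≤ S - T := by
      rcases eq_or_ne (∏ i, N (σ i) i) 0 with h0 | h0
      · simp [h0]
      · exact Nat.le_sub_of_add_le (key σ h0)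
    rcases Int.units_eq_one_or (Equiv.Perm.sign σ) with h | h <;>
      simp only [h, one_smul, Units.neg_smul, natDegree_neg] <;> exact hb
  omega

/-- iterated derivative degree bound -/
lemma natDegree_iterate_derivative_add_le (p : ℂ[X]) (j : ℕ)
    (h : derivative^[j] p ≠ 0) : (derivative^[j] p).natDegree + j ≤ p.natDegree := by
  induction j with
  | zero => simp
  | succ j ih =>
    rw [Function.iterate_succ_apply'] at h
    have hj : derivative^[j] p ≠ 0 := by
      intro h0
      rw [h0, derivative_zero] at h
      exact h rfl
    have hd : (derivative^[j] p).natDegree ≠ 0 := by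
      intro h0
      exact h (by
        have := Polynomial.natDegree_eq_zero.mp h0
        obtain ⟨x, hx⟩ := this
        rw [← hx, derivative_C])
    have := Polynomial.natDegree_derivative_lt hd
    rw [Function.iterate_succ_apply']
    have := ih hj
    omega

lemma iterate_derivative_sum' {ι : Type*} (s : Finset ι) (p : ι → ℂ[X]) (j : ℕ) :
    derivative^[j] (∑ i ∈ s, p i) = ∑ i ∈ s, derivative^[j] (p i) := by
  induction j with
  | zero => simp
  | succ j ih =>
    rw [Function.iterate_succ_apply', ih, derivative_sum]
    simp [Function.iterate_succ_apply']

end Stmt9Aux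

open Stmt9Aux

theorem stmt9 (n : ℕ) (hn : 3 ≤ n) (g : Fin n → ℂ[X]) (e : Fin n → ℕ)
    (hne : ∀ i, g i ≠ 0) (he : ∀ i, 0 < e i)
    (hcop : ∀ i j, i ≠ j → IsCoprime (g i) (g j))
    (hconst : ¬ ∀ i, (g i).natDegree = 0)
    (hsum : ∑ i, g i ^ e i = 0)
    (hind : LinearIndependent ℂ
      (fun i : Fin (n - 1) => g (Fin.castLE (Nat.sub_le n 1) i) ^ e (Fin.castLE (Nat.sub_le n 1) i))) :
    (1 : ℚ) / ((n : ℚ) - 2) < ∑ i, (1 : ℚ) / (e i : ℚ) := by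
  obtain ⟨r, rfl⟩ : ∃ r, n = r + 1 := ⟨n - 1, by omega⟩
  have hr : 2 ≤ r := by omega
  set m : ℕ := r - 1 with hm
  set d : Fin (r+1) → ℕ := fun i => (g i).natDegree with hd
  set E : Fin (r+1) → ℕ := fun i => e i * d i with hE
  set D : ℕ := ∑ i, d i with hD
  set f : Fin (r+1) → ℂ[X] := fun i => g i ^ e i with hf
  have hf0 : ∀ i, f i ≠ 0 := fun i => pow_ne_zero _ (hne i)
  have hfdeg : ∀ i, (f i).natDegree = E i := fun i => by
    rw [hf, Polynomial.natDegree_pow]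
  set M : Matrix (Fin r) (Fin r) ℂ[X] :=
    Matrix.of (fun i j : Fin r => derivative^[(j:ℕ)] (f i.castSucc)) with hM
  have hli : LinearIndependent ℂ (fun i : Fin r => f i.castSucc) := hind
  have hW : M.det ≠ 0 := det_wronskian_ne_zero r _ hli
  -- the sum of the first r rows is minus the derivative row of the last f
  have hsumf : ∑ i : Fin r, f i.castSucc = - f (Fin.last r) := by
    have h1 : ∑ i : Fin (r+1), f i = 0 := hsum
    rw [Fin.sum_univ_castSucc] at h1
    exact eq_neg_of_add_eq_zero_left h1
  have hrow : ∀ k : Fin r,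
      (M.updateRow k (fun j => - derivative^[(j:ℕ)] (f (Fin.last r)))).det = M.det := by
    intro k
    have h1 : (fun j : Fin r => - derivative^[(j:ℕ)] (f (Fin.last r)))
        = ∑ i : Fin r, (fun _ : Fin r => (1:ℂ[X])) i • M i := by
      funext j
      rw [Finset.sum_apply]
      simp only [Pi.smul_apply, one_smul, hM, Matrix.of_apply]
      rw [← iterate_derivative_sum', hsumf, iterate_derivative_neg]
    rw [h1, Matrix.det_updateRow_sum]
    simp
  -- divisibility of det by each g i ^ (e i - m)
  have hdvd : ∀ i : Fin (r+1), g i ^ (e i - m) ∣ M.det := by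
    intro i
    rcases Fin.eq_castSucc_or_eq_last i with ⟨i', rfl⟩ | rfl
    · apply dvd_det_of_row_dvd M i'
      intro j
      refine (pow_dvd_pow _ ?_).trans (pow_dvd_iterate_derivative (g i'.castSucc) _ (j:ℕ))
      have := j.2
      omega
    · rw [← hrow ⟨0, by omega⟩]
      apply dvd_det_of_row_dvd _ ⟨0, by omega⟩
      intro j
      rw [Matrix.updateRow_self]
      rw [dvd_neg]
      refine (pow_dvd_pow _ ?_).trans (pow_dvd_iterate_derivative (g (Fin.last r)) _ (j:ℕ))
      have := j.2
      omega
  have hprod : (∏ i, g i ^ (e i - m)) ∣ M.det := by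
    apply Fintype.prod_dvd_of_coprime
    · intro i j hij
      exact (hcop i j hij).pow
    · exact hdvd
  have hlow : ∑ i, (e i - m) * d i ≤ M.det.natDegree := by
    have h1 : (∏ i, g i ^ (e i - m)).natDegree = ∑ i, (e i - m) * d i := by
      rw [Polynomial.natDegree_prod _ _ (fun i _ => pow_ne_zero _ (hne i))]
      simp [Polynomial.natDegree_pow, hd]
    rw [← h1]
    exact Polynomial.natDegree_le_of_dvd hprod hW
  set T : ℕ := ∑ j : Fin r, (j:ℕ) with hT
  have hT1 : 1 ≤ T := by
    calc (1:ℕ) = ((⟨1, by omega⟩ : Fin r) : ℕ) := rfl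
      _ ≤ T := Finset.single_le_sum (f := fun j : Fin r => (j:ℕ))
          (fun _ _ => Nat.zero_le _) (Finset.mem_univ _)
  -- degree upper bound omitting each index k
  have hup : ∀ k : Fin (r+1), M.det.natDegree + T + E k ≤ ∑ i, E i := by
    intro k
    have hEsplit : ∑ i : Fin (r+1), E i = (∑ i : Fin r, E i.castSucc) + E (Fin.last r) :=
      Fin.sum_univ_castSucc E
    rcases Fin.eq_castSucc_or_eq_last k with ⟨k', rfl⟩ | rfl
    · have hN := natDegree_det_le
        (M.updateRow k' (fun j => - derivative^[(j:ℕ)] (f (Fin.last r))))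
        (fun i => if i = k' then E (Fin.last r) else E i.castSucc) ?_ ?_
      rotate_left
      · intro i j hij
        try dsimp only
        rcases eq_or_ne i k' with rfl | hik
        · rw [Matrix.updateRow_self] at hij ⊢
          rw [if_pos rfl, Polynomial.natDegree_neg, ← hfdeg]
          exact natDegree_iterate_derivative_add_le _ _ (by simpa using hij)
        · rw [Matrix.updateRow_ne hik] at hij ⊢
          rw [if_neg hik, ← hfdeg]
          exact natDegree_iterate_derivative_add_le _ _ hij
      · rw [hrow k']
        exact hW
      rw [hrow k'] at hN
      have hDsum : (∑ i : Fin r, if i = k' then E (Fin.last r) else E i.castSucc)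
          = E (Fin.last r) + ∑ i ∈ Finset.univ.erase k', E i.castSucc := by
        rw [← Finset.add_sum_erase _ _ (Finset.mem_univ k'), if_pos rfl]
        congr 1
        apply Finset.sum_congr rfl
        intro i hi
        rw [if_neg (Finset.mem_erase.mp hi).1]
      have hEr : (∑ i ∈ Finset.univ.erase k', E i.castSucc) + E k'.castSucc
          = ∑ i : Fin r, E i.castSucc :=
        Finset.sum_erase_add _ _ (Finset.mem_univ k')
      omega
    · have hN := natDegree_det_le M (fun i => E i.castSucc) ?_ hW
      rotate_left
      · intro i j hij
        try dsimp only
        rw [← hfdeg]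
        exact natDegree_iterate_derivative_add_le _ _ hij
      try dsimp only at hN
      omega
  -- pointwise comparison
  have hEsum : ∑ i, E i ≤ (∑ i, (e i - m) * d i) + m * D := by
    rw [hD, Finset.mul_sum, ← Finset.sum_add_distrib]
    apply Finset.sum_le_sum
    intro i _
    calc E i = e i * d i := rfl
      _ ≤ ((e i - m) + m) * d i := Nat.mul_le_mul_right _ (by omega)
      _ = (e i - m) * d i + m * d i := by ring
  have hkey : ∀ k, E k + 1 ≤ m * D := by
    intro k
    have h1 := hup k
    omega
  have hD1 : 1 ≤ D := by
    push_neg at hconst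
    obtain ⟨i, hi⟩ := hconst
    calc 1 ≤ d i := by simp [hd]; omega
      _ ≤ D := Finset.single_le_sum (f := d) (fun _ _ => Nat.zero_le _) (Finset.mem_univ i)
  have hm1 : 1 ≤ m := by omega
  -- final rational arithmetic
  have hmD : (0:ℚ) < (m:ℚ) * (D:ℚ) := by
    have : 0 < m * D := Nat.mul_pos hm1 hD1
    exact_mod_cast this
  have hstep : ∀ k : Fin (r+1), (d k : ℚ) / ((m:ℚ)*(D:ℚ)) < 1 / (e k : ℚ) := by
    intro k
    rw [div_lt_div_iff₀ hmD (by exact_mod_cast he k)]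
    have h1 : e k * d k < m * D := by have := hkey k; simp only [hE] at this; omega
    calc (d k : ℚ) * (e k : ℚ) = ((e k * d k : ℕ) : ℚ) := by push_cast; ring
      _ < ((m * D : ℕ) : ℚ) := by exact_mod_cast h1
      _ = 1 * ((m:ℚ) * (D:ℚ)) := by push_cast; ring
  have hcast : ((r:ℚ) + 1) - 2 = (m:ℚ) := by
    have : (m:ℚ) = (r:ℚ) - 1 := by
      rw [hm]
      push_cast [Nat.cast_sub (by omega : 1 ≤ r)]
      ring
    rw [this]; ring
  calc (1:ℚ) / ((↑(r+1):ℚ) - 2) = (D:ℚ) / ((m:ℚ)*(D:ℚ)) := by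
        push_cast
        rw [hcast]
        rw [div_eq_div_iff (by positivity : ((m:ℚ)) ≠ 0) (ne_of_gt hmD)]
        ring
    _ = ∑ k : Fin (r+1), (d k : ℚ) / ((m:ℚ)*(D:ℚ)) := by
        rw [← Finset.sum_div]
        congr 1
        rw [hD]
        push_cast
        rfl
    _ < ∑ k, 1 / (e k : ℚ) :=
        Finset.sum_lt_sum_of_nonempty Finset.univ_nonempty (fun k _ => hstep k)
end

section
/- Let f, g be univariate polynomials over ℂ with f nonconstant and f³ − g² ≠ 0. Then deg(f³ − g²) ≥ (1/2)·deg f + 1. -/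
open Polynomial

private lemma lc_derivative (p : ℂ[X]) (hp : derivative p ≠ 0) :
    (derivative p).leadingCoeff = (p.natDegree : ℂ) * p.leadingCoeff := by
  have hd : p.natDegree ≠ 0 := by
    intro h0
    exact hp (by rw [eq_C_of_natDegree_eq_zero h0, derivative_C])
  have h1 : (derivative p).natDegree = p.natDegree - 1 := by
    have := degree_derivative_eq p (Nat.pos_of_ne_zero hd)
    exact natDegree_eq_of_degree_eq_some this
  rw [leadingCoeff, h1, coeff_derivative, Nat.sub_add_cancel (Nat.one_le_iff_ne_zero.2 hd)]
  have h2 : ((p.natDegree - 1 : ℕ) : ℂ) + 1 = (p.natDegree : ℂ) := by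
    have h3 := Nat.succ_pred_eq_of_pos (Nat.pos_of_ne_zero hd)
    exact_mod_cast congrArg (fun k : ℕ => (k : ℂ)) h3
  rw [h2, leadingCoeff, mul_comm]

theorem stmt12 (f g : ℂ[X]) (hf : 0 < f.natDegree) (hne : f ^ 3 - g ^ 2 ≠ 0) :
    ((1 : ℚ) / 2) * (f.natDegree : ℚ) + 1 ≤ ((f ^ 3 - g ^ 2).natDegree : ℚ) := by
  set h := f ^ 3 - g ^ 2 with hh
  set m := f.natDegree with hm
  have hf0 : f ≠ 0 := by
    intro h0
    rw [hm, h0, natDegree_zero] at hf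
    exact lt_irrefl 0 hf
  have hf' : derivative f ≠ 0 := fun h0 =>
    hf.ne' (natDegree_eq_zero_of_derivative_eq_zero h0)
  -- case g = 0
  by_cases hg0 : g = 0
  · have hdeg : h.natDegree = 3 * m := by
      rw [hh, hg0]; simp [natDegree_pow, mul_comm, hm]
    rw [hdeg]
    push_cast
    have : (1 : ℚ) ≤ (m : ℚ) := by exact_mod_cast hf
    linarith
  -- general setup
  have hd : derivative h = 3 * f ^ 2 * derivative f - 2 * g * derivative g := by
    rw [hh, derivative_sub, derivative_pow, derivative_pow]
    simp only [C_eq_natCast]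
    push_cast
    ring
  set W : ℂ[X] := 3 * derivative f * g - 2 * f * derivative g with hW
  have hA : 3 * derivative f * h - f * derivative h = -(g * W) := by
    rw [hd, hh, hW]; ring
  have hB : 2 * derivative g * h - g * derivative h = -(f ^ 2 * W) := by
    rw [hd, hh, hW]; ring
  by_cases hWz : W = 0
  · -- degenerate case: f * h' = 3 * f' * h, compare leading coefficients
    have hA0 : f * derivative h = 3 * derivative f * h := by
      have := hA
      rw [hWz, mul_zero, neg_zero, sub_eq_zero] at this
      exact this.symm
    have hh' : derivative h ≠ 0 := by
      intro h0
      rw [h0, mul_zero] at hA0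
      have := mul_ne_zero (mul_ne_zero (by norm_num : (3 : ℂ[X]) ≠ 0) hf') hne
      exact this hA0.symm
    have hlc := congrArg leadingCoeff hA0
    rw [leadingCoeff_mul, leadingCoeff_mul, leadingCoeff_mul,
      lc_derivative h hh', lc_derivative f hf'] at hlc
    have hlc3 : (3 : ℂ[X]).leadingCoeff = 3 := by
      rw [← map_ofNat (C : ℂ →+* ℂ[X]) 3, leadingCoeff_C]
    rw [hlc3] at hlc
    have hlcf : f.leadingCoeff ≠ 0 := leadingCoeff_ne_zero.2 hf0
    have hlch : h.leadingCoeff ≠ 0 := leadingCoeff_ne_zero.2 hne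
    have hcast : (h.natDegree : ℂ) = 3 * (m : ℂ) := by
      have h2 : (h.natDegree : ℂ) * (f.leadingCoeff * h.leadingCoeff) =
          (3 * (m : ℂ)) * (f.leadingCoeff * h.leadingCoeff) := by
        linear_combination hlc
      exact mul_right_cancel₀ (mul_ne_zero hlcf hlch) h2
    have hdeg : h.natDegree = 3 * m := by exact_mod_cast hcast
    rw [hdeg]
    push_cast
    have : (1 : ℚ) ≤ (m : ℚ) := by exact_mod_cast hf
    linarith
  -- main case
  have hg' : g ≠ 0 := hg0
  set A : ℂ[X] := 3 * derivative f * h - f * derivative h with hAdef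
  set B : ℂ[X] := 2 * derivative g * h - g * derivative h with hBdef
  have hAne : A ≠ 0 := by
    rw [hA]; exact neg_ne_zero.2 (mul_ne_zero hg' hWz)
  have hBne : B ≠ 0 := by
    rw [hB]; exact neg_ne_zero.2 (mul_ne_zero (pow_ne_zero 2 hf0) hWz)
  have hAdeg : A.natDegree = g.natDegree + W.natDegree := by
    rw [hA, natDegree_neg, natDegree_mul hg' hWz]
  have hBdeg : B.natDegree = 2 * m + W.natDegree := by
    rw [hB, natDegree_neg, natDegree_mul (pow_ne_zero 2 hf0) hWz, natDegree_pow, hm]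
  -- bound on A: natDegree A < m + natDegree h
  have hbd1 : ∀ (p : ℂ[X]), p ≠ 0 → p.natDegree ≠ 0 →
      (derivative p * h).natDegree < p.natDegree + h.natDegree := by
    intro p hp hpd
    calc (derivative p * h).natDegree ≤ (derivative p).natDegree + h.natDegree :=
          natDegree_mul_le
      _ < p.natDegree + h.natDegree :=
          Nat.add_lt_add_right (natDegree_derivative_lt hpd) _
  have hbd2 : ∀ (p : ℂ[X]), (p * derivative h).natDegree < p.natDegree + h.natDegree ∨
      p * derivative h = 0 := by
    intro p
    by_cases hh' : derivative h = 0
    · right; rw [hh', mul_zero]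
    · left
      have hhd : h.natDegree ≠ 0 := by
        intro h0
        exact hh' (by rw [eq_C_of_natDegree_eq_zero h0, derivative_C])
      calc (p * derivative h).natDegree ≤ p.natDegree + (derivative h).natDegree :=
            natDegree_mul_le
        _ < p.natDegree + h.natDegree :=
            Nat.add_lt_add_left (natDegree_derivative_lt hhd) _
  have key : ∀ (p : ℂ[X]) (c : ℂ[X]), c.natDegree = 0 → p ≠ 0 → p.natDegree ≠ 0 →
      c * derivative p * h - p * derivative h ≠ 0 →
      (c * derivative p * h - p * derivative h).natDegree < p.natDegree + h.natDegree := by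
    intro p c hc hp hpd hne'
    apply lt_of_le_of_lt (natDegree_sub_le _ _)
    apply max_lt
    · calc (c * derivative p * h).natDegree ≤ (c * derivative p).natDegree + h.natDegree :=
            natDegree_mul_le
        _ ≤ c.natDegree + (derivative p).natDegree + h.natDegree :=
            Nat.add_le_add_right natDegree_mul_le _
        _ = (derivative p).natDegree + h.natDegree := by rw [hc, Nat.zero_add]
        _ < p.natDegree + h.natDegree :=
            Nat.add_lt_add_right (natDegree_derivative_lt hpd) _
    · rcases hbd2 p with hlt | hz
      · exact hlt
      · rw [hz, natDegree_zero]
        exact Nat.add_pos_left (Nat.pos_of_ne_zero hpd) _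
  have hAbound : A.natDegree < m + h.natDegree := by
    have := key f 3 (by simp) hf0 hf.ne' (by rw [← hAdef]; exact hAne)
    rw [← hAdef] at this
    exact this
  have hBbound : B.natDegree < g.natDegree + h.natDegree := by
    by_cases hn : g.natDegree = 0
    · have hg'0 : derivative g = 0 := by
        rw [eq_C_of_natDegree_eq_zero hn, derivative_C]
      have hBeq : B = -(g * derivative h) := by rw [hBdef, hg'0]; ring
      have hh' : derivative h ≠ 0 := by
        intro h0
        exact hBne (by rw [hBeq, h0, mul_zero, neg_zero])
      have hhd : h.natDegree ≠ 0 := by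
        intro h0
        exact hh' (by rw [eq_C_of_natDegree_eq_zero h0, derivative_C])
      calc B.natDegree ≤ g.natDegree + (derivative h).natDegree := by
            rw [hBeq, natDegree_neg]; exact natDegree_mul_le
        _ < g.natDegree + h.natDegree :=
            Nat.add_lt_add_left (natDegree_derivative_lt hhd) _
    · have := key g 2 (by simp) hg' hn (by rw [← hBdef]; exact hBne)
      rw [← hBdef] at this
      exact this
  rw [hAdeg] at hAbound
  rw [hBdeg] at hBbound
  have hmain : m + 2 ≤ 2 * h.natDegree := by omega
  have : (m : ℚ) + 2 ≤ 2 * (h.natDegree : ℚ) := by exact_mod_cast hmain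
  linarith
end

section
/- Suppose f, g are univariate polynomials over ℂ with f nonconstant, f³ ≠ g², and deg(f³ − g²) = (1/2)·deg f + 1 (Davenport's bound is attained). Then gcd(f, g) = 1. -/
open Polynomial UniqueFactorizationMonoid UniqueFactorizationDomain

private theorem radical_dvd_radical_aux {a b : ℂ[X]} (hb : b ≠ 0) (h : a ∣ b) :
    radical a ∣ radical b := by
  have ha : a ≠ 0 := by rintro rfl; exact hb (eq_zero_of_zero_dvd h)
  rw [radical, radical]
  apply Finset.prod_dvd_prod_of_subset
  intro p hp
  have hp2 : p ∈ normalizedFactors a :=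
    (@Multiset.mem_toFinset (ℂ[X]) (fun a b => Classical.propDecidable (a = b)) p _).mp hp
  exact (@Multiset.mem_toFinset (ℂ[X]) (fun a b => Classical.propDecidable (a = b)) p _).mpr
    (Multiset.mem_of_le
      ((dvd_iff_normalizedFactors_le_normalizedFactors ha hb).mp h) hp2)

theorem stmt13 (f g : ℂ[X]) (hf : 0 < f.natDegree) (hne : f ^ 3 ≠ g ^ 2)
    (heq : (((f ^ 3 - g ^ 2).natDegree : ℚ)) = ((1 : ℚ) / 2) * (f.natDegree : ℚ) + 1) :
    IsCoprime f g := by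
  classical
  by_contra hcop
  have hf0 : f ≠ 0 := fun e => by simp [e] at hf
  have hh0 : f ^ 3 - g ^ 2 ≠ 0 := sub_ne_zero.mpr hne
  -- 2·deg(f³-g²) = deg f + 2
  have hk2 : 2 * (f ^ 3 - g ^ 2).natDegree = f.natDegree + 2 := by
    have h2 : ((2 * (f ^ 3 - g ^ 2).natDegree : ℕ) : ℚ)
        = ((f.natDegree + 2 : ℕ) : ℚ) := by push_cast; linarith
    exact_mod_cast h2
  have hg0 : g ≠ 0 := by
    intro hg
    have h3 : (f ^ 3 - g ^ 2).natDegree = 3 * f.natDegree := by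
      rw [hg]; simp [natDegree_pow]
    omega
  -- 2·deg g = 3·deg f
  have hng : 2 * g.natDegree = 3 * f.natDegree := by
    rcases lt_trichotomy ((g ^ 2).natDegree) ((f ^ 3).natDegree) with hlt | heq' | hgt
    · have h3 := natDegree_sub_eq_left_of_natDegree_lt hlt
      rw [natDegree_pow] at h3
      omega
    · rw [natDegree_pow, natDegree_pow] at heq'
      omega
    · have h3 := natDegree_sub_eq_right_of_natDegree_lt hgt
      simp only [natDegree_pow] at h3 hgt
      omega
  -- the gcd
  set d := gcd f g with hd
  have hd0 : d ≠ 0 := fun e => hf0 (eq_zero_of_zero_dvd (e ▸ gcd_dvd_left f g))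
  have hdu : ¬ IsUnit d := fun hu => hcop ((gcd_isUnit_iff f g).mp hu)
  have ht : 0 < d.natDegree := by
    by_contra h0
    push_neg at h0
    have hdc := Polynomial.eq_C_of_natDegree_eq_zero (Nat.le_zero.mp h0)
    refine hdu ?_
    rw [hdc]
    exact isUnit_C.mpr (isUnit_iff_ne_zero.mpr (fun e => hd0 (by rw [hdc, e, map_zero])))
  obtain ⟨f₁, hf₁⟩ : d ∣ f := gcd_dvd_left f g
  obtain ⟨g₁, hg₁⟩ : d ∣ g := gcd_dvd_right f g
  have hf₁0 : f₁ ≠ 0 := by rintro rfl; rw [mul_zero] at hf₁; exact hf0 hf₁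
  have hg₁0 : g₁ ≠ 0 := by rintro rfl; rw [mul_zero] at hg₁; exact hg0 hg₁
  have e1 : f.natDegree = d.natDegree + f₁.natDegree := by
    rw [hf₁, natDegree_mul hd0 hf₁0]
  have e2 : g.natDegree = d.natDegree + g₁.natDegree := by
    rw [hg₁, natDegree_mul hd0 hg₁0]
  -- A, B and C := A - B
  set A := d * f₁ ^ 3 with hA
  set B := g₁ ^ 2 with hB
  have hA0 : A ≠ 0 := mul_ne_zero hd0 (pow_ne_zero _ hf₁0)
  have hB0 : B ≠ 0 := pow_ne_zero _ hg₁0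
  have hCeq : f ^ 3 - g ^ 2 = d ^ 2 * (A - B) := by rw [hf₁, hg₁, hA, hB]; ring
  have hC0 : A - B ≠ 0 := by
    intro e; rw [e, mul_zero] at hCeq; exact hh0 hCeq
  have eA : A.natDegree = d.natDegree + 3 * f₁.natDegree := by
    rw [hA, natDegree_mul hd0 (pow_ne_zero _ hf₁0), natDegree_pow]
  have eB : B.natDegree = 2 * g₁.natDegree := by rw [hB, natDegree_pow]
  have eC : (f ^ 3 - g ^ 2).natDegree = 2 * d.natDegree + (A - B).natDegree := by
    rw [hCeq, natDegree_mul (pow_ne_zero 2 hd0) hC0, natDegree_pow]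
  -- remove gcd of A and B
  set D := gcd A B with hDD
  have hD0 : D ≠ 0 := fun e => hA0 (eq_zero_of_zero_dvd (e ▸ gcd_dvd_left A B))
  obtain ⟨A', hA'⟩ : D ∣ A := gcd_dvd_left A B
  obtain ⟨B', hB'⟩ : D ∣ B := gcd_dvd_right A B
  have hA'0 : A' ≠ 0 := by rintro rfl; rw [mul_zero] at hA'; exact hA0 hA'
  have hB'0 : B' ≠ 0 := by rintro rfl; rw [mul_zero] at hB'; exact hB0 hB'
  have hC' : A - B = D * (A' - B') := by rw [hA', hB']; ring
  have hC'0 : A' - B' ≠ 0 := by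
    intro e; rw [e, mul_zero] at hC'; exact hC0 hC'
  have eqA' : A.natDegree = D.natDegree + A'.natDegree := by
    rw [hA', natDegree_mul hD0 hA'0]
  have eqB' : B.natDegree = D.natDegree + B'.natDegree := by
    rw [hB', natDegree_mul hD0 hB'0]
  have eqC' : (A - B).natDegree = D.natDegree + (A' - B').natDegree := by
    rw [hC', natDegree_mul hD0 hC'0]
  -- coprimality of A' and B'
  have hcop2 : IsCoprime A' B' := by
    have h5 := isCoprime_div_gcd_div_gcd (p := A) (q := B) hB0
    have h6 : A' = A / D := EuclideanDomain.eq_div_of_mul_eq_right hD0 hA'.symm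
    have h7 : B' = B / D := EuclideanDomain.eq_div_of_mul_eq_right hD0 hB'.symm
    rw [h6, h7]
    exact h5
  obtain ⟨u, v, huv⟩ := hcop2
  have hcop2' : IsCoprime A' B' := ⟨u, v, huv⟩
  -- Mason--Stothers
  have habc := Polynomial.abc (a := A') (b := -B') (c := -(A' - B')) hA'0
    (neg_ne_zero.mpr hB'0) (neg_ne_zero.mpr hC'0)
    hcop2'.neg_right
    (by ring)
  have hrw : A' * -B' * -(A' - B') = A' * B' * (A' - B') := by ring
  rw [hrw] at habc
  rcases habc with ⟨h1, -, -⟩ | ⟨hda, -, hdc⟩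
  · -- main case: degree bounds on the radical
    have hc1 : IsCoprime A' (A' - B') := ⟨u + v, -v, by linear_combination huv⟩
    have hc2 : IsCoprime B' (A' - B') := ⟨u + v, u, by linear_combination huv⟩
    have hr : radical (A' * B' * (A' - B'))
        = radical A' * radical B' * radical (A' - B') := by
      rw [radical_mul (hc1.mul_left hc2).isRelPrime, radical_mul hcop2'.isRelPrime]
    have hdeg : (radical (A' * B' * (A' - B'))).natDegree
        = (radical A').natDegree + (radical B').natDegree
          + (radical (A' - B')).natDegree := by
      rw [hr, natDegree_mul (mul_ne_zero (radical_ne_zero (a := A')) (radical_ne_zero (a := B')))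
        (radical_ne_zero (a := (A' - B'))),
        natDegree_mul (radical_ne_zero (a := A')) (radical_ne_zero (a := B'))]
    -- bound radical of A'
    have bA : (radical A').natDegree ≤ d.natDegree + f₁.natDegree := by
      have hdvd1 : A' ∣ (d * f₁) ^ 3 := by
        have hd1 : A' ∣ A := ⟨D, by rw [hA']; ring⟩
        have hd2 : A ∣ (d * f₁) ^ 3 := ⟨d ^ 2, by rw [hA]; ring⟩
        exact hd1.trans hd2
      have h8 : radical A' ∣ radical ((d * f₁) ^ 3) :=
        radical_dvd_radical_aux (pow_ne_zero _ (mul_ne_zero hd0 hf₁0)) hdvd1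
      rw [radical_pow _ (by norm_num : 3 ≠ 0)] at h8
      have h9 : radical A' ∣ d * f₁ := h8.trans (radical_dvd_self)
      have := Polynomial.natDegree_le_of_dvd h9 (mul_ne_zero hd0 hf₁0)
      rwa [natDegree_mul hd0 hf₁0] at this
    -- bound radical of B'
    have bB : (radical B').natDegree ≤ g₁.natDegree := by
      have hdvd1 : B' ∣ g₁ ^ 2 := ⟨D, by rw [← hB, hB']; ring⟩
      have h8 : radical B' ∣ radical (g₁ ^ 2) :=
        radical_dvd_radical_aux (pow_ne_zero _ hg₁0) hdvd1
      rw [radical_pow _ (by norm_num : 2 ≠ 0)] at h8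
      exact Polynomial.natDegree_le_of_dvd (h8.trans (radical_dvd_self)) hg₁0
    -- bound radical of C'
    have bC : (radical (A' - B')).natDegree ≤ (A' - B').natDegree :=
      Polynomial.natDegree_le_of_dvd (radical_dvd_self) hC'0
    rw [hdeg] at h1
    omega
  · -- degenerate case: all derivatives vanish
    have z1 : A'.natDegree = 0 := natDegree_eq_zero_of_derivative_eq_zero hda
    have z2 : (A' - B').natDegree = 0 := by
      apply natDegree_eq_zero_of_derivative_eq_zero
      rw [derivative_neg, neg_eq_zero] at hdc
      exact hdc
    omega
end

section
/- Suppose f, g are univariate polynomials over ℂ with f nonconstant and deg(f³ − g²) = (1/2)·deg f + 1. Then for every λ, μ ∈ ℂ with λμ ≠ 0, the polynomial λf³ + μg² is square-free. -/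
open Polynomial

theorem stmt14 (f g : ℂ[X]) (hf : 0 < f.natDegree)
    (heq : (((f ^ 3 - g ^ 2).natDegree : ℚ)) = ((1 : ℚ) / 2) * (f.natDegree : ℚ) + 1) :
    ∀ lam mu : ℂ, lam * mu ≠ 0 → Squarefree (C lam * f ^ 3 + C mu * g ^ 2) := by
  set h : ℂ[X] := f ^ 3 - g ^ 2 with hh
  have key : h.natDegree * 2 = f.natDegree + 2 := by
    field_simp at heq
    exact_mod_cast heq
  obtain ⟨k, hk1, hfk, hhk⟩ : ∃ k, 1 ≤ k ∧ f.natDegree = 2 * k ∧ h.natDegree = k + 1 :=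
    ⟨h.natDegree - 1, by omega, by omega, by omega⟩
  have hf0 : f ≠ 0 := by intro e; rw [e, natDegree_zero] at hfk; omega
  have hne : h ≠ 0 := by intro e; rw [e, natDegree_zero] at hhk; omega
  have hf3 : (f ^ 3).natDegree = 6 * k := by rw [natDegree_pow, hfk]; ring
  have hg2deg : (g ^ 2).natDegree = 6 * k := by
    have e : f ^ 3 - h = g ^ 2 := by rw [hh]; ring
    have : (f ^ 3 - h).natDegree = (f ^ 3).natDegree := by
      apply natDegree_sub_eq_left_of_natDegree_lt
      rw [hhk, hf3]; omega
    rw [e] at this; rw [this, hf3]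
  have hg0 : g ≠ 0 := by intro e; rw [e] at hg2deg; simp at hg2deg; omega
  have hgk : g.natDegree = 3 * k := by
    have := hg2deg; rw [natDegree_pow] at this; omega
  -- derivative identities
  have d3 : derivative (f ^ 3) = C 3 * f ^ 2 * derivative f := by
    rw [derivative_pow]; norm_num
  have d2 : derivative (g ^ 2) = C 2 * g * derivative g := by
    rw [derivative_pow]; norm_num
  have hg2 : g ^ 2 = f ^ 3 - h := by rw [hh]; ring
  have dh : derivative (g ^ 2) = C 3 * f ^ 2 * derivative f - derivative h := by
    rw [hg2, derivative_sub, d3]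
  set T : ℂ[X] := C 3 * derivative f * g - C 2 * f * derivative g with hT
  have hA : f * derivative h - C 3 * derivative f * h = g * T := by
    have idW2 : derivative (f ^ 3) * g ^ 2 - derivative (g ^ 2) * f ^ 3
        = f * f * (f * derivative h - C 3 * derivative f * h) := by
      rw [d3, dh, hg2]; ring
    have idW : derivative (f ^ 3) * g ^ 2 - derivative (g ^ 2) * f ^ 3
        = f * f * (g * T) := by
      rw [d3, d2, hT]; ring
    exact mul_left_cancel₀ (mul_ne_zero hf0 hf0) (idW2.symm.trans idW)
  -- degrees of derivatives and leading coefficients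
  have hb : h.leadingCoeff ≠ 0 := leadingCoeff_ne_zero.mpr hne
  have ha : f.leadingCoeff ≠ 0 := leadingCoeff_ne_zero.mpr hf0
  -- T is a nonzero constant
  have hTne : T ≠ 0 := by
    intro hT0
    rw [hT0, mul_zero, sub_eq_zero] at hA
    have hk1C : ((k : ℂ) + 1) ≠ 0 := by
      have : ((k + 1 : ℕ) : ℂ) ≠ 0 := Nat.cast_ne_zero.mpr (Nat.succ_ne_zero k)
      push_cast at this; exact this
    have hh'deg : (derivative h).natDegree = k := by
      apply le_antisymm
      · have := natDegree_derivative_le h; omega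
      · apply le_natDegree_of_ne_zero
        rw [coeff_derivative, ← hhk]
        exact mul_ne_zero hb hk1C
    have h2k : (2 * k - 1) + 1 = 2 * k := by omega
    have h2kC : ((2 * k - 1 : ℕ) : ℂ) + 1 = 2 * (k : ℂ) := by
      have : (((2 * k - 1) + 1 : ℕ) : ℂ) = ((2 * k : ℕ) : ℂ) := by rw [h2k]
      push_cast at this
      linear_combination this
    have hf'deg : (derivative f).natDegree = 2 * k - 1 := by
      apply le_antisymm
      · have := natDegree_derivative_le f; omega
      · apply le_natDegree_of_ne_zero
        rw [coeff_derivative, h2k, ← hfk]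
        refine mul_ne_zero ha ?_
        rw [hfk, h2kC]
        intro e
        have : ((2 * k : ℕ) : ℂ) = 0 := by push_cast; linear_combination e
        have : 2 * k = 0 := Nat.cast_eq_zero.mp this
        omega
    have hlf : (derivative h).leadingCoeff = h.leadingCoeff * ((k : ℂ) + 1) := by
      simp only [leadingCoeff, hh'deg, coeff_derivative, hhk]
    have hlf2 : (derivative f).leadingCoeff = f.leadingCoeff * (2 * (k : ℂ)) := by
      simp only [leadingCoeff, hf'deg, coeff_derivative, h2k, hfk, h2kC]
    have c1 := congrArg (fun p : ℂ[X] => p.coeff (3 * k)) hA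
    try simp only at c1
    have e1 : (f * derivative h).coeff (3 * k) =
        f.leadingCoeff * (derivative h).leadingCoeff := by
      have e : 3 * k = f.natDegree + (derivative h).natDegree := by rw [hfk, hh'deg]; ring
      rw [e, coeff_mul_degree_add_degree]
    have e2 : (C 3 * derivative f * h).coeff (3 * k) =
        3 * ((derivative f).leadingCoeff * h.leadingCoeff) := by
      have e : (C (3:ℂ)) * derivative f * h = C 3 * (derivative f * h) := by ring
      have e' : 3 * k = (derivative f).natDegree + h.natDegree := by
        rw [hf'deg, hhk]; omega
      rw [e, coeff_C_mul, e', coeff_mul_degree_add_degree]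
    rw [e1, e2, hlf, hlf2] at c1
    have e6 : (f.leadingCoeff * h.leadingCoeff) * ((k : ℂ) + 1) =
        (f.leadingCoeff * h.leadingCoeff) * (6 * (k : ℂ)) := by linear_combination c1
    have e7 : (k : ℂ) + 1 = 6 * (k : ℂ) := mul_left_cancel₀ (mul_ne_zero ha hb) e6
    have e8 : ((k + 1 : ℕ) : ℂ) = ((6 * k : ℕ) : ℂ) := by push_cast; linear_combination e7
    have : k + 1 = 6 * k := Nat.cast_injective e8
    omega
  have hgT : (g * T).natDegree ≤ 3 * k := by
    rw [← hA]
    apply le_trans (natDegree_sub_le _ _)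
    apply max_le
    · apply le_trans natDegree_mul_le
      have := natDegree_derivative_le h
      omega
    · apply le_trans natDegree_mul_le
      have h1 : (C (3:ℂ) * derivative f).natDegree ≤ 2 * k - 1 := by
        apply le_trans natDegree_mul_le
        have := natDegree_derivative_le f
        simp only [natDegree_C]
        omega
      omega
  have hTdeg : T.natDegree = 0 := by
    rw [natDegree_mul hg0 hTne, hgk] at hgT; omega
  set c : ℂ := T.coeff 0 with hc
  have hTc : T = C c := eq_C_of_natDegree_eq_zero hTdeg
  have hc0 : c ≠ 0 := by intro e; rw [e, map_zero] at hTc; exact hTne hTc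
  -- main part
  intro lam mu hlm
  have hl : lam ≠ 0 := fun e => hlm (by rw [e, zero_mul])
  have hm : mu ≠ 0 := fun e => hlm (by rw [e, mul_zero])
  set P : ℂ[X] := C lam * f ^ 3 + C mu * g ^ 2 with hPdef
  have hP0 : P ≠ 0 := by
    intro e
    have e2 : C mu * h = (C lam + C mu) * f ^ 3 := by
      rw [hh]; linear_combination -e
    by_cases hlmu : lam + mu = 0
    · rw [← map_add, hlmu, map_zero, zero_mul] at e2
      rcases mul_eq_zero.mp e2 with e3 | e3
      · exact hm (by simpa using e3)
      · exact hne e3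
    · have dd1 : (C mu * h).natDegree = k + 1 := by rw [natDegree_C_mul hm, hhk]
      have dd2 : ((C lam + C mu) * f ^ 3).natDegree = 6 * k := by
        rw [← map_add, natDegree_C_mul hlmu, hf3]
      rw [e2, dd2] at dd1; omega
  apply Polynomial.Separable.squarefree
  rw [Polynomial.Separable, ← EuclideanDomain.gcd_isUnit_iff]
  by_contra hnu
  have hd0 : EuclideanDomain.gcd P (derivative P) ≠ 0 := by
    rw [Ne, EuclideanDomain.gcd_eq_zero_iff]
    intro ⟨e, _⟩; exact hP0 e
  obtain ⟨q, hqirr, hqd⟩ := WfDvdMonoid.exists_irreducible_factor hnu hd0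
  have hqprime : Prime q := hqirr.prime
  have hqP : q ∣ P := hqd.trans (EuclideanDomain.gcd_dvd_left _ _)
  have hqP' : q ∣ derivative P := hqd.trans (EuclideanDomain.gcd_dvd_right _ _)
  have idW : g ^ 2 * derivative P - derivative (g ^ 2) * P
      = C lam * (f * (f * (g * T))) := by
    have dP : derivative P
        = C lam * (C 3 * f ^ 2 * derivative f) + C mu * (C 2 * g * derivative g) := by
      rw [hPdef, derivative_add, derivative_C_mul, derivative_C_mul, d3, d2]
    rw [dP, d2, hPdef, hT]; ring
  have hqW : q ∣ C lam * (f * (f * (g * T))) := by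
    rw [← idW]
    exact dvd_sub (hqP'.mul_left _) (hqP.mul_left _)
  have hnotC : ∀ z : ℂ, z ≠ 0 → ¬ q ∣ C z := fun z hz hd =>
    hqirr.not_isUnit (isUnit_of_dvd_unit hd (isUnit_C.mpr hz.isUnit))
  have hfg : q ∣ f ∨ q ∣ g := by
    rcases hqprime.dvd_mul.mp hqW with h1 | h1
    · exact absurd h1 (hnotC lam hl)
    rcases hqprime.dvd_mul.mp h1 with h2 | h2
    · exact Or.inl h2
    rcases hqprime.dvd_mul.mp h2 with h3 | h3
    · exact Or.inl h3
    rcases hqprime.dvd_mul.mp h3 with h4 | h4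
    · exact Or.inr h4
    · rw [hTc] at h4; exact absurd h4 (hnotC c hc0)
  have hboth : q ∣ f ∧ q ∣ g := by
    rcases hfg with hqf | hqg
    · refine ⟨hqf, ?_⟩
      have e : C mu * g ^ 2 = P - C lam * f ^ 3 := by rw [hPdef]; ring
      have hd : q ∣ C mu * g ^ 2 := by
        rw [e]; exact dvd_sub hqP ((dvd_pow hqf (by norm_num)).mul_left _)
      rcases hqprime.dvd_mul.mp hd with h1 | h1
      · exact absurd h1 (hnotC mu hm)
      · exact hqprime.dvd_of_dvd_pow h1
    · refine ⟨?_, hqg⟩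
      have e : C lam * f ^ 3 = P - C mu * g ^ 2 := by rw [hPdef]; ring
      have hd : q ∣ C lam * f ^ 3 := by
        rw [e]; exact dvd_sub hqP ((dvd_pow hqg (by norm_num)).mul_left _)
      rcases hqprime.dvd_mul.mp hd with h1 | h1
      · exact absurd h1 (hnotC lam hl)
      · exact hqprime.dvd_of_dvd_pow h1
  have : q ∣ C c := by
    rw [← hTc, hT]
    exact dvd_sub (hboth.2.mul_left _) ((hboth.1.mul_left _).mul_right _)
  exact hnotC c hc0 this
end
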